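/- arXiv:1404.4214 — 4 statements merged into one kernel-verified Lean document; each statement's English description precedes it below -/
import Mathlib

section
/- Let k = 4m with m ≥ 1, r an odd positive integer, and n an integer. The number N_k(n,r) of solutions of x_1²+...+x_k² ≡ n (mod r) in (ℤ/rℤ)^k equals r^{k-1} · ∑_{d|r} c_d(n)/d^{k/2}, where c_d(n) is Ramanujan's sum. -/
open Finset Complex

/-- Ramanujan's sum `c_d(n) = ∑_{1 ≤ j ≤ d, gcd(j,d)=1} exp(2πijn/d)`. -/
noncomputable def ramanujanC (d : ℕ) (n : ℤ) : ℂ :=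
  ∑ j ∈ (Finset.Icc 1 d).filter (fun j => Nat.gcd j d = 1),
    Complex.exp (2 * Real.pi * Complex.I * (j * n / d))

lemma int_two_sq_prime_pow (p : ℕ) (hp : p.Prime) (hodd : p ≠ 2) :
    ∀ k : ℕ, ∃ a b : ℤ, ((p : ℤ))^k ∣ a^2 + b^2 + 1 ∧ ¬ ((p:ℤ) ∣ a) := by
  haveI : Fact p.Prime := ⟨hp⟩
  have hp2 : (2 : ZMod p) ≠ 0 := by
    have h2 : ((2:ℕ) : ZMod p) ≠ 0 := by
      rw [Ne, ZMod.natCast_eq_zero_iff]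
      intro h
      exact hodd ((Nat.prime_dvd_prime_iff_eq hp Nat.prime_two).mp h)
    simpa using h2
  have hcast : ∀ x : ZMod p, (((x.val : ℤ)) : ZMod p) = x := by
    intro x; push_cast [ZMod.natCast_zmod_val]; rfl
  have hnotdvd : ∀ x : ZMod p, x ≠ 0 → ¬ ((p:ℤ) ∣ (x.val : ℤ)) := by
    intro x hx h
    rw [← ZMod.intCast_zmod_eq_zero_iff_dvd, hcast] at h
    exact hx h
  intro k
  induction k with
  | zero =>
    refine ⟨1, 0, ⟨by norm_num, fun h => ?_⟩⟩
    rcases Int.isUnit_iff.mp (isUnit_of_dvd_one h) with h1 | h1 <;>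
      · have := hp.two_le; omega
  | succ k ih =>
    rcases Nat.eq_zero_or_pos k with rfl | hk
    · -- base case k = 1, from ZMod.sq_add_sq
      obtain ⟨a0, b0, hab⟩ := ZMod.sq_add_sq p (-1 : ZMod p)
      have hne : a0 ≠ 0 ∨ b0 ≠ 0 := by
        by_contra h
        push_neg at h
        rw [h.1, h.2] at hab
        simp at hab
      -- wlog a0 ≠ 0
      obtain ⟨a1, b1, hab1, ha1⟩ : ∃ a1 b1 : ZMod p, a1^2 + b1^2 = -1 ∧ a1 ≠ 0 := by
        rcases hne with h | h
        · exact ⟨a0, b0, hab, h⟩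
        · exact ⟨b0, a0, by rw [add_comm]; exact hab, h⟩
      refine ⟨(a1.val : ℤ), (b1.val : ℤ), ?_, hnotdvd a1 ha1⟩
      rw [pow_one, ← ZMod.intCast_zmod_eq_zero_iff_dvd]
      push_cast [hcast]
      rw [hab1]; ring
    · obtain ⟨a, b, hd, hpa⟩ := ih
      obtain ⟨e, he⟩ := hd
      -- choose t with p ∣ e + 2*a*t
      have ha' : ((a : ZMod p)) ≠ 0 := by
        intro h
        exact hpa ((ZMod.intCast_zmod_eq_zero_iff_dvd a p).mp h)
      have h2a : ((2*a : ℤ) : ZMod p) ≠ 0 := by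
        push_cast
        exact mul_ne_zero hp2 ha'
      set t : ℤ := (((((-e : ℤ) : ZMod p)) * (((2*a : ℤ) : ZMod p))⁻¹).val : ℤ)
      have ht : (p:ℤ) ∣ e + 2*a*t := by
        rw [← ZMod.intCast_zmod_eq_zero_iff_dvd]
        have htc : ((t : ℤ) : ZMod p) = ((-e : ℤ) : ZMod p) * ((2*a : ℤ) : ZMod p)⁻¹ := hcast _
        have hsum : ((e + 2*a*t : ℤ) : ZMod p)
            = (e : ZMod p) + ((2*a : ℤ) : ZMod p) * ((t : ℤ) : ZMod p) := by push_cast; ring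
        rw [hsum, htc, mul_comm ((-e : ℤ) : ZMod p), mul_inv_cancel_left₀ h2a]
        simp
      obtain ⟨c, hc⟩ := ht
      refine ⟨a + (p:ℤ)^k * t, b, ⟨c + (p:ℤ)^(k-1) * t^2, ?_⟩, fun h => ?_⟩
      · have hkk : k - 1 + (k + 1) = 2 * k := by omega
        have expand : (a + (p:ℤ)^k * t)^2 + b^2 + 1
            = (a^2 + b^2 + 1) + (p:ℤ)^k * (2*a*t) + ((p:ℤ)^k)^2 * t^2 := by
          ring
        rw [expand, he]
        have hsplit : ((p:ℤ)^k)^2 = (p:ℤ)^(k+1) * (p:ℤ)^(k-1) := by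
          rw [← pow_mul, ← pow_add]; congr 1; omega
        rw [hsplit]
        calc (p:ℤ)^k * e + (p:ℤ)^k * (2*a*t) + (p:ℤ)^(k+1) * (p:ℤ)^(k-1) * t^2
            = (p:ℤ)^k * (e + 2*a*t) + (p:ℤ)^(k+1) * ((p:ℤ)^(k-1) * t^2) := by ring
          _ = (p:ℤ)^(k+1) * c + (p:ℤ)^(k+1) * ((p:ℤ)^(k-1) * t^2) := by rw [hc]; ring
          _ = (p:ℤ)^(k+1) * (c + (p:ℤ)^(k-1) * t^2) := by ring
      · apply hpa
        have h2 : (p:ℤ) ∣ (p:ℤ)^k * t := Dvd.dvd.mul_right (dvd_pow_self _ hk.ne') t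
        simpa using dvd_sub h h2

lemma zmod_neg_one_sum_two_sq : ∀ r : ℕ, 0 < r → Odd r → ∃ a b : ZMod r, a^2 + b^2 = -1 := by
  intro r
  induction r using Nat.recOnPosPrimePosCoprime with
  | prime_pow p n hp hn =>
    intro _ hodd
    have hp' : p.Prime := hp
    have hp2 : p ≠ 2 := by
      rintro rfl
      exact (Nat.not_odd_iff_even.mpr (Nat.even_pow.mpr ⟨even_iff_two_dvd.mpr dvd_rfl, hn.ne'⟩)) hodd
    obtain ⟨a, b, hd, -⟩ := int_two_sq_prime_pow p hp' hp2 n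
    refine ⟨(a : ZMod (p^n)), (b : ZMod (p^n)), ?_⟩
    have h0 : ((a^2 + b^2 + 1 : ℤ) : ZMod (p^n)) = 0 := by
      rw [ZMod.intCast_zmod_eq_zero_iff_dvd]
      exact_mod_cast hd
    push_cast at h0
    linear_combination h0
  | zero => intro h; exact absurd h (lt_irrefl 0)
  | one => intro _ _; exact ⟨0, 0, Subsingleton.elim _ _⟩
  | coprime a b ha hb hab iha ihb =>
    intro hpos hodd
    have hodda : Odd a := (Nat.odd_mul.mp hodd).1
    have hoddb : Odd b := (Nat.odd_mul.mp hodd).2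
    obtain ⟨xa, ya, hxa⟩ := iha (by omega) hodda
    obtain ⟨xb, yb, hxb⟩ := ihb (by omega) hoddb
    let e := ZMod.chineseRemainder hab
    refine ⟨e.symm (xa, xb), e.symm (ya, yb), ?_⟩
    have : e.symm (xa, xb) ^ 2 + e.symm (ya, yb) ^ 2
        = e.symm ((xa, xb)^2 + (ya, yb)^2) := by
      rw [map_add, map_pow, map_pow]
    rw [this]
    have : ((xa, xb)^2 + (ya, yb)^2 : ZMod a × ZMod b) = (-1 : ZMod a × ZMod b) := by
      rw [Prod.ext_iff]
      constructor <;> simp [hxa, hxb]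
    rw [this, map_neg, map_one]


section Gauss

variable (r : ℕ) [NeZero r]

/-- The quadratic Gauss sum `S(t) = ∑ₓ e(t x² / r)`. -/
noncomputable def Sg (t : ZMod r) : ℂ := ∑ x : ZMod r, ZMod.stdAddChar (t * x^2)

/-- Number of `u` with `t * u = 0` equals `gcd(t.val, r)`. -/
lemma card_annihilator (t : ZMod r) :
    (Finset.univ.filter fun u : ZMod r => t * u = 0).card = Nat.gcd t.val r := by
  have hr : 0 < r := Nat.pos_of_ne_zero (NeZero.ne r)
  set v := t.val with hv
  set g := Nat.gcd v r with hg
  have hgr : g ∣ r := Nat.gcd_dvd_right v r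
  have hgv : g ∣ v := Nat.gcd_dvd_left v r
  have hgpos : 0 < g := Nat.gcd_pos_of_pos_right v hr
  set r' := r / g with hr'
  have hrr' : g * r' = r := Nat.mul_div_cancel' hgr
  have hr'pos : 0 < r' := Nat.div_pos (Nat.le_of_dvd hr hgr) hgpos
  have hkey : ∀ u : ZMod r, t * u = 0 ↔ r' ∣ u.val := by
    intro u
    have h1 : t * u = ((v * u.val : ℕ) : ZMod r) := by
      rw [hv]; push_cast [ZMod.natCast_zmod_val]; ring
    rw [h1, ZMod.natCast_eq_zero_iff]
    constructor
    · intro h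
      have h2 : g * r' ∣ (g * (v / g)) * u.val := by
        rw [hrr', Nat.mul_div_cancel' hgv]; exact h
      have h3 : r' ∣ (v / g) * u.val :=
        (Nat.mul_dvd_mul_iff_left hgpos).mp (by rw [mul_assoc] at h2; exact h2)
      exact (Nat.Coprime.dvd_of_dvd_mul_left
        ((Nat.coprime_div_gcd_div_gcd hgpos).symm) h3)
    · rintro ⟨c, hc⟩
      refine ⟨(v / g) * c, ?_⟩
      rw [hc]
      calc v * (r' * c) = (g * (v / g)) * (r' * c) := by rw [Nat.mul_div_cancel' hgv]
        _ = (g * r') * ((v / g) * c) := by ring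
        _ = r * ((v / g) * c) := by rw [hrr']
  have hval : ∀ u : ZMod r, u.val < r := fun u => ZMod.val_lt u
  rw [show (Finset.univ.filter fun u : ZMod r => t * u = 0)
      = Finset.univ.filter (fun u : ZMod r => r' ∣ u.val) by
    apply Finset.filter_congr; intro u _; simp [hkey u]]
  rw [← Finset.card_range g]
  apply Finset.card_bij' (fun u _ => u.val / r') (fun i _ => ((i * r' : ℕ) : ZMod r))
  · intro u hu
    simp only [Finset.mem_filter, Finset.mem_univ, true_and] at hu ⊢
    rw [Finset.mem_range]
    rw [Nat.div_lt_iff_lt_mul hr'pos]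
    calc u.val < r := hval u
    _ = g * r' := hrr'.symm
  · intro i hi
    simp only [Finset.mem_range] at hi
    simp only [Finset.mem_filter, Finset.mem_univ, true_and]
    rw [ZMod.val_cast_of_lt]
    · exact ⟨i, mul_comm i r'⟩
    · calc i * r' < g * r' := (Nat.mul_lt_mul_right hr'pos).mpr hi
      _ = r := hrr'
  · intro u hu
    simp only [Finset.mem_filter, Finset.mem_univ, true_and] at hu
    rw [Nat.div_mul_cancel hu, ZMod.natCast_zmod_val]
  · intro i hi
    simp only [Finset.mem_range] at hi
    rw [ZMod.val_cast_of_lt (by calc i * r' < g * r' := (Nat.mul_lt_mul_right hr'pos).mpr hi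
          _ = r := hrr'),
      Nat.mul_div_cancel _ hr'pos]

end Gauss

section Gauss2

variable (r : ℕ) [NeZero r]

lemma Sg_as_pair (t s : ZMod r) :
    Sg r t * Sg r s = ∑ p : ZMod r × ZMod r, ZMod.stdAddChar (t * p.1^2 + s * p.2^2) := by
  rw [Sg, Sg, Fintype.sum_mul_sum, Fintype.sum_prod_type]
  simp_rw [AddChar.map_add_eq_mul]

lemma Sg_mul_Sg_neg (hodd : Odd r) (t : ZMod r) :
    Sg r t * Sg r (-t) = (r : ℂ) * Nat.gcd t.val r := by
  have h2 : IsUnit (2 : ZMod r) := by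
    have h := (ZMod.isUnit_iff_coprime 2 r).mpr (Nat.coprime_two_left.mpr hodd)
    simpa using h
  have h4 : IsUnit (4 : ZMod r) := by
    have := h2.mul h2
    rwa [show (2 : ZMod r) * 2 = 4 by norm_num] at this
  obtain ⟨c, hc⟩ := h2.exists_left_inv
  let e2 : (ZMod r × ZMod r) ≃ (ZMod r × ZMod r) :=
    { toFun := fun p => (p.1 + p.2, p.1 - p.2)
      invFun := fun p => (c * (p.1 + p.2), c * (p.1 - p.2))
      left_inv := by
        rintro ⟨x, y⟩
        simp only [Prod.mk.injEq]
        constructor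
        · linear_combination x * hc
        · linear_combination y * hc
      right_inv := by
        rintro ⟨x, y⟩
        simp only [Prod.mk.injEq]
        constructor
        · linear_combination x * hc
        · linear_combination y * hc }
  calc Sg r t * Sg r (-t)
      = ∑ p : ZMod r × ZMod r, ZMod.stdAddChar (t * p.1^2 + (-t) * p.2^2) := Sg_as_pair r t (-t)
    _ = ∑ p : ZMod r × ZMod r, ZMod.stdAddChar (t * (e2 p).1^2 + (-t) * (e2 p).2^2) :=
        (Equiv.sum_comp e2 (fun p => ZMod.stdAddChar (t * p.1^2 + (-t) * p.2^2))).symm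
    _ = ∑ p : ZMod r × ZMod r, ZMod.stdAddChar (p.2 * (4 * t * p.1)) := by
        apply Finset.sum_congr rfl
        intro p _
        congr 1
        show t * (p.1 + p.2)^2 + (-t) * (p.1 - p.2)^2 = p.2 * (4 * t * p.1)
        ring
    _ = ∑ x : ZMod r, ∑ y : ZMod r, ZMod.stdAddChar (y * (4 * t * x)) := by
        rw [Fintype.sum_prod_type]
    _ = ∑ x : ZMod r, ((if 4 * t * x = 0 then (Fintype.card (ZMod r)) else 0 : ℕ) : ℂ) := by
        apply Finset.sum_congr rfl
        intro x _
        exact AddChar.sum_mulShift _ (ZMod.isPrimitive_stdAddChar r)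
    _ = (r : ℂ) * Nat.gcd t.val r := by
        simp_rw [apply_ite (Nat.cast : ℕ → ℂ), Nat.cast_zero]
        rw [Finset.sum_ite, Finset.sum_const, Finset.sum_const_zero, add_zero]
        have hfilter : (Finset.univ.filter fun x : ZMod r => 4 * t * x = 0)
            = Finset.univ.filter (fun x : ZMod r => t * x = 0) := by
          apply Finset.filter_congr
          intro x _
          constructor
          · intro h
            exact h4.mul_left_eq_zero.mp (by linear_combination h)
          · intro h
            rw [mul_assoc, h, mul_zero]
        rw [hfilter, card_annihilator r t, ZMod.card, nsmul_eq_mul]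
        push_cast
        ring

lemma Sg_neg_sq (hr0 : 0 < r) (hodd : Odd r) (t : ZMod r) :
    Sg r (-t) ^ 2 = Sg r t ^ 2 := by
  obtain ⟨a, b, hab⟩ := zmod_neg_one_sum_two_sq r hr0 hodd
  let φ : (ZMod r × ZMod r) ≃ (ZMod r × ZMod r) :=
    { toFun := fun p => (a * p.1 + b * p.2, b * p.1 - a * p.2)
      invFun := fun p => (-(a * p.1 + b * p.2), -(b * p.1 - a * p.2))
      left_inv := by
        rintro ⟨x, y⟩
        simp only [Prod.mk.injEq]
        constructor
        · linear_combination (-x) * hab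
        · linear_combination (-y) * hab
      right_inv := by
        rintro ⟨x, y⟩
        simp only [Prod.mk.injEq]
        constructor
        · linear_combination (-x) * hab
        · linear_combination (-y) * hab }
  have key : Sg r t * Sg r t = Sg r (-t) * Sg r (-t) := by
    rw [Sg_as_pair, Sg_as_pair]
    calc ∑ p : ZMod r × ZMod r, ZMod.stdAddChar (t * p.1^2 + t * p.2^2)
        = ∑ p : ZMod r × ZMod r, ZMod.stdAddChar (t * (φ p).1^2 + t * (φ p).2^2) :=
          (Equiv.sum_comp φ (fun p => ZMod.stdAddChar (t * p.1^2 + t * p.2^2))).symm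
      _ = ∑ p : ZMod r × ZMod r, ZMod.stdAddChar ((-t) * p.1^2 + (-t) * p.2^2) := by
          apply Finset.sum_congr rfl
          intro p _
          congr 1
          show t * (a * p.1 + b * p.2)^2 + t * (b * p.1 - a * p.2)^2
              = (-t) * p.1^2 + (-t) * p.2^2
          linear_combination (t * (p.1^2 + p.2^2)) * hab
  rw [pow_two, pow_two, key]

lemma Sg_pow_four (hr0 : 0 < r) (hodd : Odd r) (t : ZMod r) :
    Sg r t ^ 4 = ((r : ℂ) * Nat.gcd t.val r) ^ 2 := by
  have h4 : Sg r t ^ 4 = (Sg r t ^ 2) * (Sg r (-t) ^ 2) := by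
    rw [Sg_neg_sq r hr0 hodd t]; ring
  rw [h4, show (Sg r t ^ 2) * (Sg r (-t) ^ 2) = (Sg r t * Sg r (-t)) ^ 2 by ring,
    Sg_mul_Sg_neg r hodd t]

end Gauss2


section Main

variable (r : ℕ) [NeZero r]

lemma psi_map_sum {ι : Type} (s : Finset ι) (f : ι → ZMod r) :
    ZMod.stdAddChar (∑ i ∈ s, f i) = ∏ i ∈ s, ZMod.stdAddChar (f i) := by
  induction s using Finset.cons_induction with
  | empty => simp
  | cons a s ha ih => rw [Finset.sum_cons, Finset.prod_cons, AddChar.map_add_eq_mul, ih]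

lemma sum_prod_pow (k : ℕ) (g : ZMod r → ℂ) :
    (∑ x : Fin k → ZMod r, ∏ i, g (x i)) = (∑ v : ZMod r, g v) ^ k := by
  calc ∑ x : Fin k → ZMod r, ∏ i, g (x i)
      = ∑ x ∈ Fintype.piFinset (fun _ : Fin k => (Finset.univ : Finset (ZMod r))),
          ∏ i, g (x i) := by rw [Fintype.piFinset_univ]
    _ = ∏ _i : Fin k, ∑ v : ZMod r, g v := (Finset.prod_univ_sum _ _).symm
    _ = (∑ v : ZMod r, g v) ^ k := by
        rw [Finset.prod_const, Finset.card_univ, Fintype.card_fin]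

lemma key_val (d j : ℕ) (hd : d ∣ r) (h1 : 1 ≤ j) (h2 : j ≤ d) (hgcd : Nat.gcd j d = 1) :
    (((j * (r / d) : ℕ) : ZMod r)).val.gcd r = r / d := by
  have hr0 : r ≠ 0 := NeZero.ne r
  have hrpos : 0 < r := Nat.pos_of_ne_zero hr0
  have hd0 : 0 < d := Nat.pos_of_dvd_of_pos hd hrpos
  have hrd : d * (r / d) = r := Nat.mul_div_cancel' hd
  have hrdpos : 0 < r / d := Nat.div_pos (Nat.le_of_dvd hrpos hd) hd0
  rcases eq_or_lt_of_le h2 with rfl | hlt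
  · -- j = d, so d = 1
    have hd1 : j = 1 := by rwa [Nat.gcd_self] at hgcd
    subst hd1
    rw [Nat.div_one, one_mul, ZMod.natCast_self, ZMod.val_zero, Nat.gcd_zero_left]
  · have hjr : j * (r / d) < r := by
      calc j * (r / d) < d * (r / d) := (Nat.mul_lt_mul_right hrdpos).mpr hlt
        _ = r := hrd
    rw [ZMod.val_cast_of_lt hjr,
      show (j * (r / d)).gcd r = (j * (r / d)).gcd (d * (r / d)) by rw [hrd],
      Nat.gcd_mul_right, hgcd, one_mul]

set_option maxHeartbeats 1000000 in
lemma step_C (n : ℤ) (F : ℕ → ℂ) :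
    (∑ d ∈ r.divisors, ∑ j ∈ (Finset.Icc 1 d).filter (fun j => Nat.gcd j d = 1),
        Complex.exp (2 * Real.pi * Complex.I * (j * n / d)) * F (r / d))
      = ∑ t : ZMod r, ZMod.stdAddChar (t * ((n : ℤ) : ZMod r)) * F (Nat.gcd t.val r) := by
  have hr0 : (r : ℕ) ≠ 0 := NeZero.ne r
  rw [Finset.sum_sigma']
  refine Finset.sum_nbij' (i := fun p => ((p.2 * (r / p.1) : ℕ) : ZMod r))
    (j := fun t => ⟨r / Nat.gcd t.val r, if t = 0 then 1 else t.val / Nat.gcd t.val r⟩)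
    ?_ ?_ ?_ ?_ ?_
  · intro p _
    exact Finset.mem_univ _
  · intro t _
    rcases eq_or_ne t 0 with rfl | ht
    · simp only [ZMod.val_zero, Nat.gcd_zero_left, Nat.div_self (Nat.pos_of_ne_zero hr0),
        if_pos rfl]
      rw [Finset.mem_sigma]
      constructor
      · exact Nat.mem_divisors.mpr ⟨one_dvd r, hr0⟩
      · simp
    · have hv0 : t.val ≠ 0 := fun h => ht ((ZMod.val_eq_zero t).mp h)
      have hg : 0 < Nat.gcd t.val r := Nat.gcd_pos_of_pos_right _ (Nat.pos_of_ne_zero hr0)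
      have hgr : Nat.gcd t.val r ∣ r := Nat.gcd_dvd_right _ _
      have hgv : Nat.gcd t.val r ∣ t.val := Nat.gcd_dvd_left _ _
      rw [if_neg ht, Finset.mem_sigma]
      constructor
      · exact Nat.mem_divisors.mpr ⟨Nat.div_dvd_of_dvd hgr, hr0⟩
      · rw [Finset.mem_filter, Finset.mem_Icc]
        refine ⟨⟨?_, ?_⟩, ?_⟩
        · exact Nat.one_le_div_iff hg |>.mpr (Nat.le_of_dvd (Nat.pos_of_ne_zero hv0) hgv)
        · exact Nat.div_le_div_right (le_of_lt (ZMod.val_lt t))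
        · exact Nat.coprime_div_gcd_div_gcd hg
  · -- left inverse
    rintro ⟨d, j⟩ hp
    simp only [Finset.mem_sigma, Nat.mem_divisors, Finset.mem_filter, Finset.mem_Icc] at hp
    dsimp only
    obtain ⟨⟨hd, _⟩, ⟨h1j, h2j⟩, hgcd⟩ := hp
    have hrpos : 0 < r := Nat.pos_of_ne_zero hr0
    have hd0 : 0 < d := Nat.pos_of_dvd_of_pos hd hrpos
    have hrd : d * (r / d) = r := Nat.mul_div_cancel' hd
    have hrdpos : 0 < r / d := Nat.div_pos (Nat.le_of_dvd hrpos hd) hd0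
    rcases eq_or_lt_of_le h2j with rfl | hlt
    · have hd1 : j = 1 := by rwa [Nat.gcd_self] at hgcd
      subst hd1
      simp only [Nat.div_one, one_mul, ZMod.natCast_self, ZMod.val_zero,
        Nat.gcd_zero_left, Nat.div_self hrpos, if_pos rfl]
      simp
    · have hjr : j * (r / d) < r := by
        calc j * (r / d) < d * (r / d) := (Nat.mul_lt_mul_right hrdpos).mpr hlt
          _ = r := hrd
      have hval : (((j * (r / d) : ℕ) : ZMod r)).val = j * (r / d) :=
        ZMod.val_cast_of_lt hjr
      have hgc : (((j * (r / d) : ℕ) : ZMod r)).val.gcd r = r / d :=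
        key_val r d j hd h1j (le_of_lt hlt) hgcd
      have hne : ((j * (r / d) : ℕ) : ZMod r) ≠ 0 := by
        intro h
        rw [h, ZMod.val_zero] at hval
        exact (Nat.mul_ne_zero (by omega) hrdpos.ne') hval.symm
      rw [hgc, if_neg hne, hval, Nat.div_div_self hd hr0, Nat.mul_div_cancel _ hrdpos]
  · -- right inverse
    intro t _
    rcases eq_or_ne t 0 with rfl | ht
    · dsimp only
      rw [if_pos rfl, ZMod.val_zero, Nat.gcd_zero_left,
        Nat.div_self (Nat.pos_of_ne_zero hr0), Nat.div_one, one_mul, ZMod.natCast_self]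
    · have hg : 0 < Nat.gcd t.val r := Nat.gcd_pos_of_pos_right _ (Nat.pos_of_ne_zero hr0)
      have hgr : Nat.gcd t.val r ∣ r := Nat.gcd_dvd_right _ _
      have hgv : Nat.gcd t.val r ∣ t.val := Nat.gcd_dvd_left _ _
      dsimp only
      rw [if_neg ht, Nat.div_div_self hgr hr0, Nat.div_mul_cancel hgv,
        ZMod.natCast_zmod_val]
  · -- values
    rintro ⟨d, j⟩ hp
    simp only [Finset.mem_sigma, Nat.mem_divisors, Finset.mem_filter, Finset.mem_Icc] at hp
    dsimp only
    obtain ⟨⟨hd, _⟩, ⟨h1j, h2j⟩, hgcd⟩ := hp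
    have hrpos : 0 < r := Nat.pos_of_ne_zero hr0
    have hd0 : 0 < d := Nat.pos_of_dvd_of_pos hd hrpos
    have hdC : (d : ℂ) ≠ 0 := Nat.cast_ne_zero.mpr hd0.ne'
    have hgc : (((j * (r / d) : ℕ) : ZMod r)).val.gcd r = r / d :=
      key_val r d j hd h1j h2j hgcd
    rw [hgc]
    congr 1
    have hrC : (r : ℂ) ≠ 0 := Nat.cast_ne_zero.mpr hr0
    have hmul : ((j * (r / d) : ℕ) : ZMod r) * ((n : ℤ) : ZMod r)
        = (((((j * (r / d) : ℕ) : ℤ) * n : ℤ)) : ZMod r) := by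
      rw [Int.cast_mul, Int.cast_natCast]
    rw [hmul, ZMod.stdAddChar_coe]
    congr 1
    have hrdC : ((r / d : ℕ) : ℂ) = (r : ℂ) / (d : ℂ) := Nat.cast_div hd hdC
    push_cast [hrdC]
    field_simp
    have hdr : (d : ℂ) * ((r : ℂ) / (d : ℂ)) = r := by field_simp
    rw [← Int.natCast_div, Int.cast_natCast, hrdC, mul_assoc _ (d : ℂ), hdr]

set_option maxHeartbeats 1000000 in
theorem count_sum_of_squares_4m' (m : ℕ) (hm : 0 < m) (hr : 0 < r) (hodd : Odd r) (n : ℤ) :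
    (Nat.card {x : Fin (4 * m) → ZMod r // ∑ i, (x i) ^ 2 = (n : ZMod r)} : ℂ) =
      (r : ℂ) ^ (4 * m - 1) * ∑ d ∈ r.divisors, ramanujanC d n / (d : ℂ) ^ (2 * m) := by
  have hr0 : (r : ℕ) ≠ 0 := hr.ne'
  have hrC : (r : ℂ) ≠ 0 := Nat.cast_ne_zero.mpr hr0
  set nb : ZMod r := ((n : ℤ) : ZMod r) with hnb
  -- Step A
  have cardeq : (Nat.card {x : Fin (4 * m) → ZMod r // ∑ i, (x i) ^ 2 = nb} : ℂ)
      = ((Finset.univ.filter fun x : Fin (4 * m) → ZMod r => ∑ i, (x i) ^ 2 = nb).card : ℂ) := by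
    rw [Nat.card_eq_fintype_card, Fintype.card_subtype]
  have h1 : ∀ x : Fin (4 * m) → ZMod r,
      (∑ t : ZMod r, ZMod.stdAddChar (t * (nb - ∑ i, (x i) ^ 2)))
        = if (∑ i, (x i) ^ 2) = nb then (r : ℂ) else 0 := by
    intro x
    rw [AddChar.sum_mulShift _ (ZMod.isPrimitive_stdAddChar r)]
    by_cases h : (∑ i, (x i) ^ 2) = nb
    · rw [if_pos (by rw [h, sub_self]), if_pos h, ZMod.card]
    · rw [if_neg (fun hc => h (sub_eq_zero.mp hc).symm), if_neg h, Nat.cast_zero]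
  have h2 : ∀ (t : ZMod r) (x : Fin (4 * m) → ZMod r),
      ZMod.stdAddChar (t * (nb - ∑ i, (x i) ^ 2))
        = ZMod.stdAddChar (t * nb) * ∏ i, ZMod.stdAddChar ((-t) * (x i) ^ 2) := by
    intro t x
    rw [← psi_map_sum, ← AddChar.map_add_eq_mul]
    congr 1
    have hms : ∑ i : Fin (4 * m), (-t) * (x i) ^ 2 = (-t) * ∑ i, (x i) ^ 2 :=
      (Finset.mul_sum _ _ _).symm
    rw [hms]; ring
  have h3 : ∀ t : ZMod r,
      (∑ x : Fin (4 * m) → ZMod r, ∏ i, ZMod.stdAddChar ((-t) * (x i) ^ 2))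
        = Sg r (-t) ^ (4 * m) := by
    intro t
    rw [Sg]
    exact sum_prod_pow r (4 * m) (fun v => ZMod.stdAddChar ((-t) * v ^ 2))
  have hA : (r : ℂ) * (Nat.card {x : Fin (4 * m) → ZMod r // ∑ i, (x i) ^ 2 = nb} : ℂ)
      = ∑ t : ZMod r, ZMod.stdAddChar (t * nb) * Sg r (-t) ^ (4 * m) := by
    rw [cardeq]
    calc (r : ℂ) * ((Finset.univ.filter fun x : Fin (4 * m) → ZMod r =>
            ∑ i, (x i) ^ 2 = nb).card : ℂ)
        = ∑ x : Fin (4 * m) → ZMod r, if (∑ i, (x i) ^ 2) = nb then (r : ℂ) else 0 := by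
          rw [Finset.sum_ite, Finset.sum_const, Finset.sum_const_zero, add_zero,
            nsmul_eq_mul, mul_comm]
      _ = ∑ x : Fin (4 * m) → ZMod r, ∑ t : ZMod r,
            ZMod.stdAddChar (t * (nb - ∑ i, (x i) ^ 2)) := by
          apply Finset.sum_congr rfl; intro x _; rw [h1 x]
      _ = ∑ t : ZMod r, ∑ x : Fin (4 * m) → ZMod r,
            ZMod.stdAddChar (t * (nb - ∑ i, (x i) ^ 2)) := Finset.sum_comm
      _ = ∑ t : ZMod r, ZMod.stdAddChar (t * nb) * Sg r (-t) ^ (4 * m) := by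
          apply Finset.sum_congr rfl
          intro t _
          rw [← h3 t, Finset.mul_sum]
          apply Finset.sum_congr rfl
          intro x _
          rw [h2 t x]
  -- Step B
  have hB : ∀ t : ZMod r, Sg r (-t) ^ (4 * m) = ((r : ℂ) * (Nat.gcd t.val r : ℂ)) ^ (2 * m) := by
    intro t
    calc Sg r (-t) ^ (4 * m) = (Sg r (-t) ^ 2) ^ (2 * m) := by
          rw [show 4 * m = 2 * (2 * m) by ring, pow_mul]
      _ = (Sg r t ^ 2) ^ (2 * m) := by rw [Sg_neg_sq r hr hodd t]
      _ = ((Sg r t ^ 2) ^ 2) ^ m := pow_mul _ 2 m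
      _ = (Sg r t ^ 4) ^ m := by
          rw [show (Sg r t ^ 2) ^ 2 = Sg r t ^ 4 by rw [← pow_mul]]
      _ = (((r : ℂ) * (Nat.gcd t.val r : ℂ)) ^ 2) ^ m := by rw [Sg_pow_four r hr hodd t]
      _ = ((r : ℂ) * (Nat.gcd t.val r : ℂ)) ^ (2 * m) := (pow_mul _ 2 m).symm
  -- Step D : assemble
  apply mul_left_cancel₀ hrC
  rw [hA]
  calc ∑ t : ZMod r, ZMod.stdAddChar (t * nb) * Sg r (-t) ^ (4 * m)
      = ∑ t : ZMod r, ZMod.stdAddChar (t * nb)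
          * ((fun g : ℕ => ((r : ℂ) * (g : ℂ)) ^ (2 * m)) (Nat.gcd t.val r)) := by
        apply Finset.sum_congr rfl; intro t _; rw [hB t]
    _ = ∑ d ∈ r.divisors, ∑ j ∈ (Finset.Icc 1 d).filter (fun j => Nat.gcd j d = 1),
          Complex.exp (2 * Real.pi * Complex.I * (j * n / d))
            * ((fun g : ℕ => ((r : ℂ) * (g : ℂ)) ^ (2 * m)) (r / d)) :=
        (step_C r n (fun g : ℕ => ((r : ℂ) * (g : ℂ)) ^ (2 * m))).symm
    _ = ∑ d ∈ r.divisors, ramanujanC d n * ((r : ℂ) * ((r / d : ℕ) : ℂ)) ^ (2 * m) := by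
        apply Finset.sum_congr rfl
        intro d _
        rw [ramanujanC, Finset.sum_mul]
    _ = (r : ℂ) * ((r : ℂ) ^ (4 * m - 1) * ∑ d ∈ r.divisors,
          ramanujanC d n / (d : ℂ) ^ (2 * m)) := by
        rw [Finset.mul_sum, Finset.mul_sum]
        apply Finset.sum_congr rfl
        intro d hdmem
        rw [Nat.mem_divisors] at hdmem
        obtain ⟨hd, _⟩ := hdmem
        have hrpos : 0 < r := Nat.pos_of_ne_zero hr0
        have hd0 : 0 < d := Nat.pos_of_dvd_of_pos hd hrpos
        have hdC : (d : ℂ) ≠ 0 := Nat.cast_ne_zero.mpr hd0.ne'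
        have hrdC : ((r / d : ℕ) : ℂ) = (r : ℂ) / (d : ℂ) := Nat.cast_div hd hdC
        have hpow : (r : ℂ) * (r : ℂ) ^ (4 * m - 1) = (r : ℂ) ^ (4 * m) := by
          rw [← pow_succ']
          congr 1
          omega
        rw [hrdC, ← mul_assoc, hpow]
        have : ((r : ℂ) * ((r : ℂ) / (d : ℂ))) ^ (2 * m)
            = (r : ℂ) ^ (4 * m) / (d : ℂ) ^ (2 * m) := by
          rw [show ((r : ℂ) * ((r : ℂ) / (d : ℂ))) = (r : ℂ) ^ 2 / (d : ℂ) by ring,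
            div_pow, ← pow_mul, show 2 * (2 * m) = 4 * m by ring]
        rw [this]
        ring


theorem count_sum_of_squares_4m (m r : ℕ) (hm : 0 < m) (hr : 0 < r) (hodd : Odd r) (n : ℤ) :
    (Nat.card {x : Fin (4 * m) → ZMod r // ∑ i, (x i) ^ 2 = (n : ZMod r)} : ℂ) =
      (r : ℂ) ^ (4 * m - 1) * ∑ d ∈ r.divisors, ramanujanC d n / (d : ℂ) ^ (2 * m) := by
  haveI : NeZero r := ⟨hr.ne'⟩
  exact count_sum_of_squares_4m' r m hm hr hodd n

end Main
end

section
/- Let k = 4m with m ≥ 1, r an odd positive integer, and n an integer. Then N_k(n,r) = r^{2m-1} · ∑_{d | gcd(n,r)} d · J_{2m}(r/d), where J_s is the Jordan totient function of order s. (When n = 0, the sum is over all d | r.) -/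
/-- The Jordan totient function `J_s(n) = n^s ∏_{p ∣ n} (1 - 1/p^s)`. -/
noncomputable def jordanTotient (s n : ℕ) : ℝ :=
  (n : ℝ) ^ s * ∏ p ∈ n.primeFactors, (1 - 1 / (p : ℝ) ^ s)

set_option linter.unusedSectionVars false


open Finset

section Bezout
variable {ι : Type*} [DecidableEq ι]

lemma finset_gcd_bezout (s : Finset ι) (v : ι → ℕ) :
    ∃ c : ι → ℤ, ((s.gcd v : ℕ) : ℤ) = ∑ i ∈ s, c i * (v i : ℤ) := by
  induction s using Finset.induction_on with
  | empty => exact ⟨0, by simp⟩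
  | @insert a s ha ih =>
    obtain ⟨c, hc⟩ := ih
    refine ⟨fun j => if j = a then Nat.gcdA (v a) (s.gcd v) else Nat.gcdB (v a) (s.gcd v) * c j, ?_⟩
    have hg : (Finset.gcd (insert a s) v : ℕ) = Nat.gcd (v a) (s.gcd v) := by
      rw [Finset.gcd_insert]; rfl
    set A := Nat.gcdA (v a) (s.gcd v) with hA
    set B := Nat.gcdB (v a) (s.gcd v) with hB
    have hs : ∑ x ∈ s, (if x = a then A else B * c x) * (v x : ℤ)
        = ∑ x ∈ s, (B * (c x * (v x : ℤ))) := by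
      refine Finset.sum_congr rfl (fun j hj => ?_)
      rw [if_neg (by rintro rfl; exact ha hj)]; ring
    rw [Finset.sum_insert ha, hg, Nat.gcd_eq_gcd_ab, hc, hs, ← Finset.mul_sum, ← hc]
    beta_reduce
    rw [if_pos rfl]
    ring
end Bezout

section Content

variable {ι : Type*} [Fintype ι] [DecidableEq ι] {r : ℕ}

/-- gcd of the values of a tuple together with the modulus. -/
def mcontent (y : ι → ZMod r) : ℕ := Nat.gcd r (Finset.univ.gcd fun i => (y i).val)

lemma mcontent_dvd_r (y : ι → ZMod r) : mcontent y ∣ r := Nat.gcd_dvd_left _ _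

lemma mcontent_dvd_val (y : ι → ZMod r) (i : ι) : mcontent y ∣ (y i).val :=
  (Nat.gcd_dvd_right _ _).trans (Finset.gcd_dvd (Finset.mem_univ i))

lemma mcontent_pos [NeZero r] (y : ι → ZMod r) : 0 < mcontent y :=
  Nat.gcd_pos_of_pos_left _ (Nat.pos_of_ne_zero (NeZero.ne r))

lemma natCast_val_self [NeZero r] (x : ZMod r) : ((x.val : ℕ) : ZMod r) = x := by
  rw [ZMod.natCast_val, ZMod.cast_id]

/-- the content is attained as a value of the dot-product map -/
lemma exists_dot_eq_mcontent [NeZero r] (y : ι → ZMod r) :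
    ∃ z : ι → ZMod r, ∑ i, y i * z i = (mcontent y : ZMod r) := by
  set G := Finset.univ.gcd fun i => (y i).val with hG
  obtain ⟨c, hc⟩ := finset_gcd_bezout Finset.univ (fun i => (y i).val)
  refine ⟨fun i => ((Nat.gcdB r G * c i : ℤ) : ZMod r), ?_⟩
  have h1 : ((Nat.gcd r G : ℕ) : ZMod r) = ((G : ZMod r)) * ((Nat.gcdB r G : ℤ) : ZMod r) := by
    have := Nat.gcd_eq_gcd_ab r G
    have h2 : (((r : ℤ) * Nat.gcdA r G + (G:ℤ) * Nat.gcdB r G : ℤ) : ZMod r)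
        = ((Nat.gcd r G : ℤ) : ZMod r) := by rw [← this]
    push_cast at h2 ⊢
    rw [ZMod.natCast_self] at h2
    simpa using h2.symm
  have h3 : ((G : ℕ) : ZMod r) = ∑ i, ((c i : ℤ) : ZMod r) * y i := by
    have h4 := congrArg (fun t : ℤ => ((t : ℤ) : ZMod r)) hc
    push_cast at h4
    simpa only [natCast_val_self] using h4
  show (∑ i, y i * ((Nat.gcdB r G * c i : ℤ) : ZMod r)) = _
  rw [mcontent, h1, h3, Finset.sum_mul]
  push_cast
  apply Finset.sum_congr rfl
  intro i _
  ring

/-- every value of the dot-product map is a multiple of the content -/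
lemma dot_eq_mcontent_mul [NeZero r] (y z : ι → ZMod r) :
    ∃ w : ZMod r, ∑ i, y i * z i = (mcontent y : ZMod r) * w := by
  refine ⟨∑ i, (((y i).val / mcontent y : ℕ) : ZMod r) * z i, ?_⟩
  rw [Finset.mul_sum]
  apply Finset.sum_congr rfl
  intro i _
  have h1 : (mcontent y) * ((y i).val / mcontent y) = (y i).val :=
    Nat.mul_div_cancel' (mcontent_dvd_val y i)
  have h2 : (mcontent y : ZMod r) * (((y i).val / mcontent y : ℕ) : ZMod r) = y i := by
    rw [← Nat.cast_mul, h1, natCast_val_self]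
  conv_lhs => rw [← h2]
  ring

lemma mcontent_mul_dvd_iff [NeZero r] {g : ℕ} (hg : g ∣ r) (n : ℤ) :
    (∃ w : ZMod r, (n : ZMod r) = (g : ZMod r) * w) ↔ g ∣ Int.gcd n r := by
  constructor
  · rintro ⟨w, hw⟩
    have h1 : ((n - g * (w.val : ℤ) : ℤ) : ZMod r) = 0 := by
      push_cast
      rw [natCast_val_self, hw]
      ring
    have h2 : (r : ℤ) ∣ n - g * (w.val : ℤ) := (ZMod.intCast_zmod_eq_zero_iff_dvd _ r).1 h1
    have h3 : (g : ℤ) ∣ n := by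
      have hgr : (g : ℤ) ∣ (r : ℤ) := Int.natCast_dvd_natCast.2 hg
      have := dvd_add (hgr.trans h2) (Dvd.intro _ rfl : (g:ℤ) ∣ g * (w.val : ℤ))
      simpa using this
    have h4 : (g : ℤ) ∣ (Int.gcd n r : ℤ) := Int.dvd_coe_gcd h3 (Int.natCast_dvd_natCast.2 hg)
    exact_mod_cast h4
  · intro h
    have h3 : (g : ℤ) ∣ n := (Int.natCast_dvd_natCast.2 h).trans (Int.gcd_dvd_left _ _)
    obtain ⟨q, hq⟩ := h3
    refine ⟨(q : ZMod r), ?_⟩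
    rw [hq]
    push_cast
    ring

end Content


lemma hensel_step (p : ℕ) (hp : p.Prime) (hodd : p ≠ 2) (a : ℕ) (ha : 1 ≤ a) (s t : ℤ)
    (h : (p:ℤ)^a ∣ s^2+t^2+1) (hs : ¬ (p:ℤ) ∣ s) :
    ∃ s' : ℤ, (p:ℤ)^(a+1) ∣ s'^2+t^2+1 := by
  haveI : Fact p.Prime := ⟨hp⟩
  obtain ⟨c, hc⟩ := h
  have h2s : (2 * (s:ZMod p)) ≠ 0 := by
    have h2 : (2 : ZMod p) ≠ 0 := by
      intro h2
      have : (p:ℤ) ∣ 2 := by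
        have : ((2:ℤ) : ZMod p) = 0 := by exact_mod_cast h2
        exact (ZMod.intCast_zmod_eq_zero_iff_dvd 2 p).1 this
      have h2' : p ∣ 2 := by exact_mod_cast this
      have := (Nat.prime_dvd_prime_iff_eq hp Nat.prime_two).1 h2'
      exact hodd this
    have hsz : ((s:ZMod p)) ≠ 0 := by
      intro h0
      exact hs ((ZMod.intCast_zmod_eq_zero_iff_dvd s p).1 h0)
    exact mul_ne_zero h2 hsz
  set hbar : ZMod p := (-(c : ZMod p)) / (2 * (s:ZMod p)) with hhbar
  refine ⟨s + (hbar.val : ℤ) * (p:ℤ)^a, ?_⟩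
  have key : (p:ℤ) ∣ c + 2 * s * (hbar.val : ℤ) := by
    rw [← ZMod.intCast_zmod_eq_zero_iff_dvd]
    push_cast
    rw [ZMod.natCast_val, ZMod.cast_id]
    rw [hhbar]
    rw [mul_div_assoc', mul_div_cancel_left₀ _ h2s]
    ring
  obtain ⟨d, hd⟩ := key
  refine ⟨d + (hbar.val : ℤ)^2 * (p:ℤ)^(a-1), ?_⟩
  have hpow : (p:ℤ)^a * (p:ℤ)^a = (p:ℤ)^(a+1) * (p:ℤ)^(a-1) := by
    rw [← pow_add, ← pow_add]
    congr 1
    omega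
  linear_combination hc + (p:ℤ)^a * hd + (hbar.val:ℤ)^2 * hpow

lemma prime_pow_case (p : ℕ) (hp : p.Prime) (hodd : p ≠ 2) :
    ∀ a : ℕ, ∃ s t : ℤ, (p:ℤ)^a ∣ s^2+t^2+1 := by
  haveI : Fact p.Prime := ⟨hp⟩
  intro a
  induction a with
  | zero => exact ⟨0, 0, by norm_num⟩
  | succ a ih =>
    rcases Nat.eq_zero_or_pos a with rfl | ha
    · obtain ⟨x, y, hxy⟩ := ZMod.sq_add_sq p (-1)
      refine ⟨(x.val : ℤ), (y.val : ℤ), ?_⟩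
      rw [pow_one, ← ZMod.intCast_zmod_eq_zero_iff_dvd]
      push_cast
      rw [ZMod.natCast_val, ZMod.natCast_val, ZMod.cast_id, ZMod.cast_id]
      rw [hxy]; ring
    · obtain ⟨s, t, hst⟩ := ih
      have hnot : ¬ ((p:ℤ) ∣ s ∧ (p:ℤ) ∣ t) := by
        rintro ⟨h1, h2⟩
        have hpd : (p:ℤ) ∣ s^2+t^2+1 := dvd_trans (dvd_pow_self _ (by omega : a ≠ 0)) hst
        have hss : (p:ℤ) ∣ s^2 + t^2 :=
          dvd_add (dvd_pow h1 two_ne_zero) (dvd_pow h2 two_ne_zero)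
        have h1' : (p:ℤ) ∣ 1 := by
          have := dvd_sub hpd hss
          simpa using this
        have hle : (p:ℤ) ≤ 1 := Int.le_of_dvd one_pos h1'
        have := hp.two_le
        omega
      by_cases hs : (p:ℤ) ∣ s
      · have ht : ¬ (p:ℤ) ∣ t := fun h => hnot ⟨hs, h⟩
        obtain ⟨t', ht'⟩ := hensel_step p hp hodd a ha t s
          (by rw [show t^2+s^2+1 = s^2+t^2+1 by ring]; exact hst) ht
        exact ⟨s, t', by rw [show s^2+t'^2+1 = t'^2+s^2+1 by ring]; exact ht'⟩
      · obtain ⟨s', hs'⟩ := hensel_step p hp hodd a ha s t hst hs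
        exact ⟨s', t, hs'⟩

lemma exists_int_sum_two_sq (r : ℕ) (hodd : Odd r) : ∃ s t : ℤ, (r:ℤ) ∣ s^2+t^2+1 := by
  induction r using Nat.recOnPosPrimePosCoprime with
  | prime_pow p n hp hn =>
    have hpp : p.Prime := hp
    have hpodd : p ≠ 2 := by
      rintro rfl
      have : Even (2^n) := (Nat.even_pow).2 ⟨even_two, by omega⟩
      exact (Nat.not_odd_iff_even.2 this) hodd
    obtain ⟨s, t, h⟩ := prime_pow_case p hpp hpodd n
    exact ⟨s, t, by push_cast at h ⊢; exact h⟩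
  | zero => simp at hodd
  | one => exact ⟨0, 0, by norm_num⟩
  | coprime a b ha hb hab iha ihb =>
    rw [Nat.odd_mul] at hodd
    obtain ⟨s₁, t₁, h₁⟩ := iha hodd.1
    obtain ⟨s₂, t₂, h₂⟩ := ihb hodd.2
    haveI : NeZero (a*b) := ⟨by positivity⟩
    set e := ZMod.chineseRemainder hab with he
    set S : ZMod (a*b) := e.symm ((s₁ : ZMod a), (s₂ : ZMod b)) with hSdef
    set T : ZMod (a*b) := e.symm ((t₁ : ZMod a), (t₂ : ZMod b)) with hTdef
    refine ⟨(S.val : ℤ), (T.val : ℤ), ?_⟩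
    rw [← ZMod.intCast_zmod_eq_zero_iff_dvd]
    have hScast : ((S.val : ℕ) : ZMod (a*b)) = S := by
      rw [ZMod.natCast_val, ZMod.cast_id]
    have hTcast : ((T.val : ℕ) : ZMod (a*b)) = T := by
      rw [ZMod.natCast_val, ZMod.cast_id]
    push_cast
    rw [hScast, hTcast]
    apply e.injective
    rw [map_add, map_add, map_pow, map_pow, map_one, map_zero]
    have hS : e S = ((s₁ : ZMod a), (s₂ : ZMod b)) := e.apply_symm_apply _
    have hT : e T = ((t₁ : ZMod a), (t₂ : ZMod b)) := e.apply_symm_apply _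
    rw [hS, hT]
    have c1 : ((s₁^2+t₁^2+1 : ℤ) : ZMod a) = 0 := (ZMod.intCast_zmod_eq_zero_iff_dvd _ a).2 h₁
    have c2 : ((s₂^2+t₂^2+1 : ℤ) : ZMod b) = 0 := (ZMod.intCast_zmod_eq_zero_iff_dvd _ b).2 h₂
    push_cast at c1 c2
    ext
    · show (s₁ : ZMod a)^2 + (t₁ : ZMod a)^2 + 1 = 0
      linear_combination c1
    · show (s₂ : ZMod b)^2 + (t₂ : ZMod b)^2 + 1 = 0
      linear_combination c2

lemma exists_sq_add_sq_neg_one (r : ℕ) (hodd : Odd r) : ∃ s t : ZMod r, s^2 + t^2 = -1 := by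
  obtain ⟨s, t, h⟩ := exists_int_sum_two_sq r hodd
  refine ⟨(s : ZMod r), (t : ZMod r), ?_⟩
  have : ((s^2+t^2+1 : ℤ) : ZMod r) = 0 := (ZMod.intCast_zmod_eq_zero_iff_dvd _ r).2 h
  push_cast at this
  linear_combination this


section Fiber

variable {ι : Type*} [Fintype ι] [DecidableEq ι] {r : ℕ}

/-- The dot-product with `y` as an `AddMonoidHom`. -/
def dotHom (y : ι → ZMod r) : (ι → ZMod r) →+ ZMod r where
  toFun z := ∑ i, y i * z i
  map_zero' := by simp
  map_add' z w := by
    rw [← Finset.sum_add_distrib]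
    exact Finset.sum_congr rfl fun i _ => by simp [mul_add]

lemma dotHom_apply (y z : ι → ZMod r) : dotHom y z = ∑ i, y i * z i := rfl

lemma card_dom : Nat.card (ι → ZMod r) = r ^ (Fintype.card ι) := by
  rw [Nat.card_pi]
  simp [Nat.card_zmod]

lemma range_dotHom [NeZero r] (y : ι → ZMod r) :
    (dotHom y).range = AddSubgroup.zmultiples ((mcontent y : ℕ) : ZMod r) := by
  ext x
  constructor
  · rintro ⟨z, rfl⟩
    obtain ⟨w, hw⟩ := dot_eq_mcontent_mul y z
    rw [dotHom_apply, hw]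
    rw [AddSubgroup.mem_zmultiples_iff]
    refine ⟨(w.val : ℤ), ?_⟩
    rw [zsmul_eq_mul]
    push_cast
    rw [natCast_val_self]
    ring
  · intro hx
    rw [AddSubgroup.mem_zmultiples_iff] at hx
    obtain ⟨k, hk⟩ := hx
    obtain ⟨z₀, hz₀⟩ := exists_dot_eq_mcontent y
    refine ⟨fun i => z₀ i * (k : ZMod r), ?_⟩
    rw [dotHom_apply]
    have : ∑ i, y i * (z₀ i * (k : ZMod r)) = (∑ i, y i * z₀ i) * (k : ZMod r) := by
      rw [Finset.sum_mul]
      exact Finset.sum_congr rfl fun i _ => by ring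
    rw [this, hz₀, ← hk, zsmul_eq_mul]
    ring

lemma card_range_dotHom [NeZero r] (y : ι → ZMod r) :
    Nat.card (dotHom y).range = r / mcontent y := by
  rw [range_dotHom, Nat.card_zmultiples, ZMod.addOrderOf_coe _ (NeZero.ne r),
    Nat.gcd_comm, Nat.gcd_eq_left (mcontent_dvd_r y)]

lemma card_ker_dotHom [NeZero r] (hk : 0 < Fintype.card ι) (y : ι → ZMod r) :
    Nat.card (dotHom y).ker = mcontent y * r ^ (Fintype.card ι - 1) := by
  have h1 := AddSubgroup.card_eq_card_quotient_mul_card_addSubgroup (dotHom y).ker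
  rw [card_dom] at h1
  have h2 : Nat.card ((ι → ZMod r) ⧸ (dotHom y).ker) = Nat.card (dotHom y).range :=
    Nat.card_congr (QuotientAddGroup.quotientKerEquivRange (dotHom y)).toEquiv
  rw [h2, card_range_dotHom] at h1
  have hg := mcontent_dvd_r y
  have hg0 := mcontent_pos (r := r) y
  have hr0 : 0 < r := Nat.pos_of_ne_zero (NeZero.ne r)
  have hq0 : 0 < r / mcontent y := Nat.div_pos (Nat.le_of_dvd hr0 hg) hg0
  apply Nat.eq_of_mul_eq_mul_left hq0
  rw [← h1]
  have : (r / mcontent y) * (mcontent y * r ^ (Fintype.card ι - 1))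
      = ((r / mcontent y) * mcontent y) * r ^ (Fintype.card ι - 1) := by ring
  rw [this, Nat.div_mul_cancel hg, ← pow_succ']
  congr 1
  omega

lemma card_fiber_eq [NeZero r] (hk : 0 < Fintype.card ι) (y : ι → ZMod r) (n : ℤ) :
    Nat.card {z : ι → ZMod r // ∑ i, y i * z i = (n : ZMod r)}
      = if mcontent y ∣ Int.gcd n r then mcontent y * r ^ (Fintype.card ι - 1) else 0 := by
  by_cases hdvd : mcontent y ∣ Int.gcd n r
  · rw [if_pos hdvd]
    obtain ⟨w, hw⟩ := (mcontent_mul_dvd_iff (mcontent_dvd_r y) n).2 hdvd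
    obtain ⟨z₀, hz₀⟩ := exists_dot_eq_mcontent y
    set z₁ : ι → ZMod r := fun i => z₀ i * w with hz₁def
    have hz₁ : ∑ i, y i * z₁ i = (n : ZMod r) := by
      have : ∑ i, y i * (z₀ i * w) = (∑ i, y i * z₀ i) * w := by
        rw [Finset.sum_mul]; exact Finset.sum_congr rfl fun i _ => by ring
      rw [hz₁def]
      simpa [this, hz₀] using hw.symm
    have hEquiv : {z : ι → ZMod r // ∑ i, y i * z i = (n : ZMod r)} ≃ (dotHom y).ker := by
      refine ⟨fun z => ⟨z.1 - z₁, ?_⟩, fun z => ⟨z.1 + z₁, ?_⟩, ?_, ?_⟩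
      · have := z.2
        rw [AddMonoidHom.mem_ker, map_sub]
        rw [dotHom_apply, dotHom_apply, this, hz₁, sub_self]
      · have hz := z.2
        rw [AddMonoidHom.mem_ker] at hz
        have : dotHom y (z.1 + z₁) = (n : ZMod r) := by
          rw [map_add, hz, dotHom_apply, hz₁, zero_add]
        simpa [dotHom_apply] using this
      · intro z; ext i; simp
      · intro z; ext i; simp
    rw [Nat.card_congr hEquiv, card_ker_dotHom hk]
  · rw [if_neg hdvd]
    have hempty : IsEmpty {z : ι → ZMod r // ∑ i, y i * z i = (n : ZMod r)} := by
      constructor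
      rintro ⟨z, hz⟩
      obtain ⟨w, hw⟩ := dot_eq_mcontent_mul y z
      exact hdvd ((mcontent_mul_dvd_iff (mcontent_dvd_r y) n).1 ⟨w, by rw [← hz, hw]⟩)
    simp [Nat.card_of_isEmpty]

end Fiber


section MainCount

variable {ι : Type*} [Fintype ι] [DecidableEq ι] {r : ℕ}

lemma card_dot_eq_sum [NeZero r] (hk : 0 < Fintype.card ι) (n : ℤ) :
    Nat.card {x : (ι → ZMod r) × (ι → ZMod r) // ∑ i, x.1 i * x.2 i = (n : ZMod r)}
      = ∑ d ∈ (Int.gcd n r).divisors,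
          (Nat.card {y : ι → ZMod r // mcontent y = d}) * (d * r ^ (Fintype.card ι - 1)) := by
  classical
  have hgcd0 : Int.gcd n r ≠ 0 := by
    intro h
    rw [Int.gcd_eq_zero_iff] at h
    exact NeZero.ne r (by exact_mod_cast h.2)
  rw [Nat.card_congr (Equiv.subtypeProdEquivSigmaSubtype
    (fun (y z : ι → ZMod r) => ∑ i, y i * z i = (n : ZMod r)))]
  rw [Nat.card_eq_fintype_card, Fintype.card_sigma]
  have step1 : ∀ y : ι → ZMod r,
      Fintype.card {z : ι → ZMod r // ∑ i, y i * z i = (n : ZMod r)}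
        = ∑ d ∈ (Int.gcd n r).divisors,
            if mcontent y = d then d * r ^ (Fintype.card ι - 1) else 0 := by
    intro y
    rw [← Nat.card_eq_fintype_card, card_fiber_eq hk y n]
    rw [Finset.sum_ite_eq (Int.gcd n r).divisors (mcontent y)
      (fun d => d * r ^ (Fintype.card ι - 1))]
    by_cases h : mcontent y ∣ Int.gcd n r
    · rw [if_pos h, if_pos (Nat.mem_divisors.2 ⟨h, hgcd0⟩)]
    · rw [if_neg h, if_neg (fun hc => h (Nat.mem_divisors.1 hc).1)]
  rw [Finset.sum_congr rfl (fun y _ => step1 y), Finset.sum_comm]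
  refine Finset.sum_congr rfl (fun d _ => ?_)
  rw [← Finset.sum_filter, Finset.sum_const, smul_eq_mul]
  congr 1
  rw [Nat.card_eq_fintype_card, Fintype.card_subtype]

lemma card_content_d (hr : 0 < r) {d : ℕ} (hd : d ∣ r) (hd0 : 0 < d) :
    Nat.card {y : ι → ZMod r // mcontent y = d}
      = Nat.card {y : ι → ZMod (r/d) // mcontent y = 1} := by
  haveI : NeZero r := ⟨hr.ne'⟩
  have hq0 : 0 < r / d := Nat.div_pos (Nat.le_of_dvd hr hd) hd0
  haveI : NeZero (r / d) := ⟨hq0.ne'⟩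
  have hdq : d * (r / d) = r := Nat.mul_div_cancel' hd
  have val_to : ∀ (y : ι → ZMod r) (i : ι),
      ((((y i).val / d : ℕ) : ZMod (r/d))).val = (y i).val / d :=
    fun y i => ZMod.val_cast_of_lt (Nat.div_lt_div_of_lt_of_dvd hd (ZMod.val_lt _))
  have val_from : ∀ (y' : ι → ZMod (r/d)) (i : ι),
      (((d * (y' i).val : ℕ) : ZMod r)).val = d * (y' i).val := by
    intro y' i
    apply ZMod.val_cast_of_lt
    calc d * (y' i).val < d * (r / d) := by
          exact Nat.mul_lt_mul_of_le_of_lt (le_refl d) (ZMod.val_lt _) hd0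
      _ = r := hdq
  have content_to : ∀ (y : ι → ZMod r), mcontent y = d →
      mcontent (fun i => (((y i).val / d : ℕ) : ZMod (r/d))) = 1 := by
    intro y hy
    have hdvdval : ∀ i, d ∣ (y i).val := fun i => hy ▸ mcontent_dvd_val y i
    apply Nat.eq_of_mul_eq_mul_left hd0
    rw [mul_one]
    unfold mcontent
    rw [Finset.gcd_congr rfl (fun i _ => val_to y i)]
    set G' := Finset.univ.gcd (fun i : ι => (y i).val / d) with hG'
    have hG : Finset.univ.gcd (fun i => (y i).val) = d * G' := by
      conv_lhs => rw [Finset.gcd_congr rfl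
        (fun i _ => (Nat.mul_div_cancel' (hdvdval i)).symm)]
      rw [hG', Finset.gcd_mul_left]
      simp [normalize_eq]
    have h2 : d * Nat.gcd (r/d) G' = Nat.gcd r (d * G') := by
      rw [← Nat.gcd_mul_left d (r/d) G', hdq]
    rw [h2, ← hG]
    exact hy
  have content_from : ∀ (y' : ι → ZMod (r/d)), mcontent y' = 1 →
      mcontent (fun i => ((d * (y' i).val : ℕ) : ZMod r)) = d := by
    intro y' hy'
    unfold mcontent
    rw [Finset.gcd_congr rfl (fun i _ => val_from y' i)]
    have hG : Finset.univ.gcd (fun i => d * (y' i).val)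
        = d * Finset.univ.gcd (fun i => (y' i).val) := by
      rw [Finset.gcd_mul_left]
      simp [normalize_eq]
    set G' := Finset.univ.gcd (fun i : ι => (y' i).val) with hG'
    rw [hG]
    have h2 : Nat.gcd r (d * G') = d * Nat.gcd (r/d) G' := by
      rw [← Nat.gcd_mul_left d (r/d) G', hdq]
    rw [h2]
    have : Nat.gcd (r/d) G' = 1 := hy'
    rw [this, mul_one]
  refine Nat.card_congr ⟨?_, ?_, ?_, ?_⟩
  · exact fun y => ⟨fun i => (((y.1 i).val / d : ℕ) : ZMod (r/d)), content_to y.1 y.2⟩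
  · exact fun y' => ⟨fun i => ((d * (y'.1 i).val : ℕ) : ZMod r), content_from y'.1 y'.2⟩
  · rintro ⟨y, hy⟩
    ext i
    simp only
    rw [val_to y i, Nat.mul_div_cancel' (hy ▸ mcontent_dvd_val y i), natCast_val_self]
  · rintro ⟨y', hy'⟩
    ext i
    simp only
    rw [val_from y' i, Nat.mul_div_cancel_left _ hd0, natCast_val_self]

end MainCount


section Pcnt

variable {ι : Type*} [Fintype ι] [DecidableEq ι]

lemma mcontent_eq_one_iff {r : ℕ} [NeZero r] (y : ι → ZMod r) :
    mcontent y = 1 ↔ ∃ z : ι → ZMod r, ∑ i, y i * z i = 1 := by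
  constructor
  · intro h
    obtain ⟨z, hz⟩ := exists_dot_eq_mcontent y
    exact ⟨z, by rw [hz, h, Nat.cast_one]⟩
  · rintro ⟨z, hz⟩
    obtain ⟨w, hw⟩ := dot_eq_mcontent_mul y z
    have h2 : mcontent y ∣ Int.gcd 1 r := by
      apply (mcontent_mul_dvd_iff (mcontent_dvd_r y) 1).1
      exact ⟨w, by rw [Int.cast_one, ← hz, hw]⟩
    rw [Int.one_gcd] at h2
    exact Nat.dvd_one.1 h2

lemma pcnt_mul {a b : ℕ} (ha : 0 < a) (hb : 0 < b) (hab : a.Coprime b) :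
    Nat.card {y : ι → ZMod (a*b) // mcontent y = 1}
      = Nat.card {y : ι → ZMod a // mcontent y = 1}
        * Nat.card {y : ι → ZMod b // mcontent y = 1} := by
  haveI : NeZero a := ⟨ha.ne'⟩
  haveI : NeZero b := ⟨hb.ne'⟩
  haveI : NeZero (a*b) := ⟨by positivity⟩
  set e := ZMod.chineseRemainder hab with he
  set f1 : ZMod (a*b) →+* ZMod a := (RingHom.fst _ _).comp e.toRingHom with hf1
  set f2 : ZMod (a*b) →+* ZMod b := (RingHom.snd _ _).comp e.toRingHom with hf2
  set E : (ι → ZMod (a*b)) ≃ ((ι → ZMod a) × (ι → ZMod b)) :=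
    (Equiv.piCongrRight fun _ => e.toEquiv).trans
      (Equiv.arrowProdEquivProdArrow _ _ _) with hE
  have hE1 : ∀ (y : ι → ZMod (a*b)) (i : ι), (E y).1 i = f1 (y i) := fun y i => rfl
  have hE2 : ∀ (y : ι → ZMod (a*b)) (i : ι), (E y).2 i = f2 (y i) := fun y i => rfl
  have key : ∀ y : ι → ZMod (a*b),
      mcontent y = 1 ↔ (mcontent (E y).1 = 1 ∧ mcontent (E y).2 = 1) := by
    intro y
    rw [mcontent_eq_one_iff, mcontent_eq_one_iff, mcontent_eq_one_iff]
    constructor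
    · rintro ⟨z, hz⟩
      constructor
      · refine ⟨fun i => f1 (z i), ?_⟩
        have h3 := congrArg f1 hz
        rw [map_sum, map_one] at h3
        rw [← h3]
        exact Finset.sum_congr rfl fun i _ => by rw [hE1, map_mul]
      · refine ⟨fun i => f2 (z i), ?_⟩
        have h3 := congrArg f2 hz
        rw [map_sum, map_one] at h3
        rw [← h3]
        exact Finset.sum_congr rfl fun i _ => by rw [hE2, map_mul]
    · rintro ⟨⟨za, hza⟩, ⟨zb, hzb⟩⟩
      refine ⟨fun i => e.symm (za i, zb i), ?_⟩
      apply e.injective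
      rw [map_sum, map_one]
      have hcomp : ∀ i, e (y i * e.symm (za i, zb i))
          = ((E y).1 i * za i, (E y).2 i * zb i) := by
        intro i
        rw [map_mul, e.apply_symm_apply]
        have : e (y i) = ((E y).1 i, (E y).2 i) := by
          rw [hE1, hE2]; rfl
        rw [this]
        rfl
      rw [Finset.sum_congr rfl fun i _ => hcomp i]
      have h1 : (∑ i, ((E y).1 i * za i, (E y).2 i * zb i) : ZMod a × ZMod b)
          = (∑ i, (E y).1 i * za i, ∑ i, (E y).2 i * zb i) := by
        ext
        · rw [Prod.fst_sum]
        · rw [Prod.snd_sum]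
      rw [h1, hza, hzb]
      rfl
  exact (Nat.card_congr ((E.subtypeEquiv key).trans
    (Equiv.subtypeProdEquivProd))).trans (Nat.card_prod _ _)

lemma card_dvd_val {s d q : ℕ} (hd : 0 < d) (hq : 0 < q) (hs : s = d * q) :
    Nat.card {v : ZMod s // d ∣ v.val} = q := by
  subst hs
  haveI : NeZero (d * q) := ⟨by positivity⟩
  haveI : NeZero q := ⟨hq.ne'⟩
  have val_from : ∀ c : ZMod q, (((d * c.val : ℕ) : ZMod (d*q))).val = d * c.val := by
    intro c
    exact ZMod.val_cast_of_lt (Nat.mul_lt_mul_of_le_of_lt (le_refl d) (ZMod.val_lt _) hd)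
  have hcard : Nat.card {v : ZMod (d*q) // d ∣ v.val} = Nat.card (ZMod q) := by
    refine Nat.card_congr ⟨fun v => ((v.1.val / d : ℕ) : ZMod q), fun c =>
      ⟨((d * c.val : ℕ) : ZMod (d*q)), by rw [val_from c]; exact Dvd.intro _ rfl⟩, ?_, ?_⟩
    · rintro ⟨v, hv⟩
      have hvlt : v.val / d < q := by
        have := ZMod.val_lt v
        have h2 : v.val / d < (d * q) / d := Nat.div_lt_div_of_lt_of_dvd ⟨q, rfl⟩ this
        rwa [Nat.mul_div_cancel_left _ hd] at h2
      ext
      simp only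
      rw [ZMod.val_cast_of_lt hvlt, Nat.mul_div_cancel' hv, natCast_val_self]
    · intro c
      simp only
      rw [val_from c, Nat.mul_div_cancel_left _ hd, natCast_val_self]
  rw [hcard, Nat.card_zmod]

lemma pcnt_prime_pow {p a : ℕ} (hp : p.Prime) (ha : 0 < a) :
    Nat.card {y : ι → ZMod (p^a) // mcontent y = 1}
      = p ^ (a * Fintype.card ι) - p ^ ((a-1) * Fintype.card ι) := by
  classical
  haveI : Fact p.Prime := ⟨hp⟩
  haveI : NeZero (p^a) := ⟨pow_ne_zero _ hp.pos.ne'⟩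
  have hiff : ∀ y : ι → ZMod (p^a), ¬ (mcontent y = 1) ↔ ∀ i, p ∣ (y i).val := by
    intro y
    constructor
    · intro h i
      have h1 : mcontent y ∣ p ^ a := mcontent_dvd_r y
      obtain ⟨j, hj, hjeq⟩ := (Nat.dvd_prime_pow hp).1 h1
      have hj0 : j ≠ 0 := by
        rintro rfl
        exact h (by simpa using hjeq)
      have hpm : p ∣ mcontent y := hjeq ▸ dvd_pow_self p hj0
      exact (hpm.trans (mcontent_dvd_val y i))
    · intro h h1
      have hpG : p ∣ Finset.univ.gcd (fun i => (y i).val) :=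
        Finset.dvd_gcd (fun i _ => h i)
      have : p ∣ mcontent y := Nat.dvd_gcd (dvd_pow_self p ha.ne') hpG
      rw [h1] at this
      exact hp.one_lt.ne' (Nat.dvd_one.1 this)
  have hcompl : Nat.card {y : ι → ZMod (p^a) // ¬ (mcontent y = 1)}
      = p ^ ((a-1) * Fintype.card ι) := by
    have h1 : Nat.card {y : ι → ZMod (p^a) // ¬ (mcontent y = 1)}
        = Nat.card {y : ι → ZMod (p^a) // ∀ i, p ∣ (y i).val} := by
      apply Nat.card_congr
      exact Equiv.subtypeEquiv (Equiv.refl _) (fun y => hiff y)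
    rw [h1]
    rw [Nat.card_congr (Equiv.subtypePiEquivPi (p := fun (_:ι) (v : ZMod (p^a)) => p ∣ v.val))]
    rw [Nat.card_pi]
    have h2 : ∀ i : ι, Nat.card {v : ZMod (p^a) // p ∣ v.val} = p^(a-1) := by
      intro i
      have hs' : p^a = p * p^(a-1) := by
        nth_rewrite 1 [← Nat.succ_pred_eq_of_pos ha]
        rw [pow_succ']
        rfl
      exact card_dvd_val hp.pos (pow_pos hp.pos _) hs'
    rw [Finset.prod_congr rfl (fun i _ => h2 i)]
    rw [Finset.prod_const, Finset.card_univ, ← pow_mul]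
  have htotal : Nat.card (ι → ZMod (p^a)) = p ^ (a * Fintype.card ι) := by
    rw [Nat.card_fun, Nat.card_zmod, ← pow_mul, Nat.card_eq_fintype_card]
  have hsum : Nat.card {y : ι → ZMod (p^a) // mcontent y = 1}
      + Nat.card {y : ι → ZMod (p^a) // ¬ (mcontent y = 1)}
      = Nat.card (ι → ZMod (p^a)) := by
    rw [Nat.card_eq_fintype_card, Nat.card_eq_fintype_card, Nat.card_eq_fintype_card,
      Fintype.card_subtype_compl]
    have := Fintype.card_subtype_le (fun y : ι → ZMod (p^a) => mcontent y = 1)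
    omega
  omega

lemma pcnt_eq_jordan (s : ℕ) (hs : 0 < s) :
    (Nat.card {y : ι → ZMod s // mcontent y = 1} : ℝ)
      = jordanTotient (Fintype.card ι) s := by
  induction s using Nat.recOnPosPrimePosCoprime with
  | prime_pow p n hp hn =>
    have hpp : p.Prime := hp
    rw [pcnt_prime_pow hpp hn]
    have hle : p ^ ((n-1) * Fintype.card ι) ≤ p ^ (n * Fintype.card ι) :=
      Nat.pow_le_pow_right hpp.pos (by
        exact Nat.mul_le_mul_right _ (by omega))
    rw [Nat.cast_sub hle]
    unfold jordanTotient
    rw [Nat.primeFactors_pow p hn.ne', hpp.primeFactors, Finset.prod_singleton]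
    have hp0 : (0:ℝ) < (p:ℝ) := by exact_mod_cast hpp.pos
    have hpk : ((p:ℝ))^(Fintype.card ι) ≠ 0 := by positivity
    have hkey : ((p:ℝ))^(n * Fintype.card ι)
        = ((p:ℝ))^((n-1) * Fintype.card ι) * ((p:ℝ))^(Fintype.card ι) := by
      rw [← pow_add]
      congr 1
      have : 1 ≤ n := hn
      nlinarith [Nat.sub_add_cancel this]
    push_cast
    rw [← pow_mul]
    rw [hkey]
    field_simp
  | zero => exact absurd hs (by omega)
  | one =>
    have hu : ∀ y : ι → ZMod 1, mcontent y = 1 := by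
      intro y
      unfold mcontent
      exact Nat.gcd_one_left _
    haveI : Unique {y : ι → ZMod 1 // mcontent y = 1} :=
      ⟨⟨fun _ => 0, hu _⟩, fun y => Subtype.ext (funext fun i => Subsingleton.elim _ _)⟩
    rw [Nat.card_unique]
    unfold jordanTotient
    simp
  | coprime a b ha hb hab iha ihb =>
    have ha0 : 0 < a := by omega
    have hb0 : 0 < b := by omega
    rw [pcnt_mul ha0 hb0 hab, Nat.cast_mul, iha ha0, ihb hb0]
    unfold jordanTotient
    rw [hab.primeFactors_mul, Finset.prod_union hab.disjoint_primeFactors]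
    push_cast
    ring

end Pcnt


section ChangeVar

variable {R : Type*} [CommRing R]

/-- block change of variables turning sum of 4 squares into `u0*u1+u2*u3`,
given `s^2+t^2 = -1` and `2*w = 1`. -/
def quadT (s t w : R) (hst : s^2 + t^2 = -1) (h2w : 2*w = 1) :
    (Fin 4 → R) ≃ (Fin 4 → R) where
  toFun u := ![w*(u 0 + u 1), w*(u 2 + u 3),
               s*(w*(u 0 - u 1)) + t*(w*(u 2 - u 3)),
               t*(w*(u 0 - u 1)) - s*(w*(u 2 - u 3))]
  invFun x := ![x 0 + (-(s*x 2) - t*x 3), x 0 - (-(s*x 2) - t*x 3),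
               x 1 + (-(t*x 2) + s*x 3), x 1 - (-(t*x 2) + s*x 3)]
  left_inv u := by
    funext i
    fin_cases i <;> simp [Matrix.cons_val_zero, Matrix.cons_val_one]
    · linear_combination (-(w*(u 0 - u 1))) * hst + (u 0) * h2w
    · linear_combination (w*(u 0 - u 1)) * hst + (u 1) * h2w
    · linear_combination (-(w*(u 2 - u 3))) * hst + (u 2) * h2w
    · linear_combination (w*(u 2 - u 3)) * hst + (u 3) * h2w
  right_inv x := by
    funext i
    fin_cases i <;> simp [Matrix.cons_val_zero, Matrix.cons_val_one]
    · linear_combination (x 0) * h2w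
    · linear_combination (x 1) * h2w
    · linear_combination (-(x 2)) * hst
        + (s*(-(s*x 2) - t*x 3) + t*(-(t*x 2) + s*x 3)) * h2w
    · linear_combination (-(x 3)) * hst
        + (t*(-(s*x 2) - t*x 3) - s*(-(t*x 2) + s*x 3)) * h2w

lemma quadT_form (s t w : R) (hst : s^2 + t^2 = -1) (h2w : 2*w = 1) (u : Fin 4 → R) :
    ∑ i, (quadT s t w hst h2w u i)^2 = u 0 * u 1 + u 2 * u 3 := by
  rw [Fin.sum_univ_four]
  show (w*(u 0 + u 1))^2 + (w*(u 2 + u 3))^2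
      + (s*(w*(u 0 - u 1)) + t*(w*(u 2 - u 3)))^2
      + (t*(w*(u 0 - u 1)) - s*(w*(u 2 - u 3)))^2 = u 0 * u 1 + u 2 * u 3
  linear_combination ((w*(u 0 - u 1))^2 + (w*(u 2 - u 3))^2) * hst
    + ((2*w+1)*(u 0 * u 1 + u 2 * u 3)) * h2w

/-- regroup a family of quadruples into a pair of families indexed by `Fin m × Fin 2`. -/
def pairE (m : ℕ) : (Fin m → Fin 4 → R) ≃ ((Fin m × Fin 2 → R) × (Fin m × Fin 2 → R)) where
  toFun v := (fun p => if p.2 = 0 then v p.1 0 else v p.1 2,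
              fun p => if p.2 = 0 then v p.1 1 else v p.1 3)
  invFun yz := fun j => ![yz.1 (j,0), yz.2 (j,0), yz.1 (j,1), yz.2 (j,1)]
  left_inv v := by
    funext j i
    fin_cases i <;> simp
  right_inv yz := by
    ext ⟨j, i⟩ <;> fin_cases i <;> simp
lemma pairE_form (m : ℕ) (v : Fin m → Fin 4 → R) :
    ∑ p : Fin m × Fin 2, (pairE m v).1 p * (pairE m v).2 p
      = ∑ j, (v j 0 * v j 1 + v j 2 * v j 3) := by
  rw [Fintype.sum_prod_type]
  refine Finset.sum_congr rfl (fun j _ => ?_)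
  rw [Fin.sum_univ_two]
  show (if (0:Fin 2) = 0 then v j 0 else v j 2) * (if (0:Fin 2) = 0 then v j 1 else v j 3)
      + (if (1:Fin 2) = 0 then v j 0 else v j 2) * (if (1:Fin 2) = 0 then v j 1 else v j 3)
      = v j 0 * v j 1 + v j 2 * v j 3
  norm_num

end ChangeVar


section Final

lemma dot_count_final {ι : Type*} [Fintype ι] [DecidableEq ι] {r : ℕ}
    (hk : 0 < Fintype.card ι) (hr : 0 < r) (n : ℤ) :
    (Nat.card {x : (ι → ZMod r) × (ι → ZMod r) // ∑ i, x.1 i * x.2 i = (n : ZMod r)} : ℝ)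
      = (r : ℝ) ^ (Fintype.card ι - 1)
        * ∑ d ∈ (Int.gcd n r).divisors, (d : ℝ) * jordanTotient (Fintype.card ι) (r / d) := by
  haveI : NeZero r := ⟨hr.ne'⟩
  rw [card_dot_eq_sum hk n, Nat.cast_sum, Finset.mul_sum]
  refine Finset.sum_congr rfl (fun d hd => ?_)
  obtain ⟨hdg, hg0⟩ := Nat.mem_divisors.1 hd
  have hd0 : 0 < d := Nat.pos_of_mem_divisors hd
  have hgr : Int.gcd n r ∣ r := by
    have h2 : (Int.gcd n (r:ℤ) : ℤ) ∣ (r:ℤ) := Int.gcd_dvd_right _ _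
    exact_mod_cast h2
  have hdr : d ∣ r := hdg.trans hgr
  rw [card_content_d hr hdr hd0]
  have hq : 0 < r / d := Nat.div_pos (Nat.le_of_dvd hr hdr) hd0
  rw [Nat.cast_mul, pcnt_eq_jordan (r/d) hq]
  push_cast
  ring


set_option maxHeartbeats 1000000 in
theorem count_sum_of_squares_4m_jordan (m r : ℕ) (hm : 0 < m) (hr : 0 < r) (hodd : Odd r)
    (n : ℤ) :
    (Nat.card {x : Fin (4 * m) → ZMod r // ∑ i, (x i) ^ 2 = (n : ZMod r)} : ℝ) =
      (r : ℝ) ^ (2 * m - 1) * ∑ d ∈ (Int.gcd n r).divisors,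
        (d : ℝ) * jordanTotient (2 * m) (r / d) := by

  haveI : NeZero r := ⟨hr.ne'⟩
  obtain ⟨s, t, hst⟩ := exists_sq_add_sq_neg_one r hodd
  have h2unit : IsUnit (2 : ZMod r) := by
    have hcop : Nat.Coprime 2 r := Nat.coprime_two_left.2 hodd
    have h2 := (ZMod.isUnit_iff_coprime 2 r).2 hcop
    exact_mod_cast h2
  obtain ⟨w, h2w⟩ := isUnit_iff_exists_inv.1 h2unit
  set idx : Fin m × Fin 4 ≃ Fin (4*m) := finProdFinEquiv.trans (finCongr (by ring)) with hidx
  set T := quadT s t w hst h2w with hT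
  set E : (Fin (4*m) → ZMod r) ≃ ((Fin m × Fin 2 → ZMod r) × (Fin m × Fin 2 → ZMod r)) :=
    (((Equiv.arrowCongr idx (Equiv.refl (ZMod r))).symm.trans (Equiv.curry _ _ _)).trans
      (Equiv.piCongrRight fun _ => T.symm)).trans (pairE m) with hE
  have hprop : ∀ x : Fin (4*m) → ZMod r,
      (∑ i, (x i)^2 = (n : ZMod r))
        ↔ (∑ p : Fin m × Fin 2, (E x).1 p * (E x).2 p = (n : ZMod r)) := by
    intro x
    set u : Fin m → Fin 4 → ZMod r := fun j i => x (idx (j, i)) with hu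
    set v : Fin m → Fin 4 → ZMod r := fun j => T.symm (u j) with hv
    have hEx : E x = pairE m v := rfl
    rw [hEx, pairE_form]
    have h2 : ∀ j, v j 0 * v j 1 + v j 2 * v j 3 = ∑ i, (u j i)^2 := by
      intro j
      have h3 : u j = T (v j) := by rw [hv, Equiv.apply_symm_apply]
      rw [h3, hT, quadT_form]
    rw [Finset.sum_congr rfl (fun j _ => h2 j)]
    have h3 : ∑ q : Fin m × Fin 4, (x (idx q))^2 = ∑ i, (x i)^2 :=
      Fintype.sum_equiv idx _ _ (fun q => rfl)
    have h4 : (∑ j : Fin m, ∑ i : Fin 4, u j i ^ 2)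
        = ∑ q : Fin m × Fin 4, (x (idx q))^2 :=
      (Fintype.sum_prod_type (f := fun q : Fin m × Fin 4 => (x (idx q))^2)).symm
    rw [h4, h3]
  have hcard : Nat.card {x : Fin (4*m) → ZMod r // ∑ i, (x i)^2 = (n : ZMod r)}
      = Nat.card {x : (Fin m × Fin 2 → ZMod r) × (Fin m × Fin 2 → ZMod r) //
          ∑ p, x.1 p * x.2 p = (n : ZMod r)} :=
    Nat.card_congr (E.subtypeEquiv hprop)
  rw [hcard]
  have hkm : Fintype.card (Fin m × Fin 2) = 2*m := by
    rw [Fintype.card_prod, Fintype.card_fin, Fintype.card_fin]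
    exact Nat.mul_comm m 2
  have hkpos : 0 < Fintype.card (Fin m × Fin 2) := by
    rw [hkm]
    exact Nat.mul_pos (by norm_num) hm
  rw [dot_count_final hkpos hr n]
  rw [hkm]

end Final
end

section
/- Let k = 4m with m ≥ 1, r an odd positive integer, and n an integer with gcd(n,r) = 1. Then N_{4m}(n,r) = r^{2m-1}·J_{2m}(r) = r^{4m-1}·∏_{p|r}(1 - 1/p^{2m}). -/
open Finset

noncomputable def cnt (k : ℕ) (R : Type) [CommRing R] (n : R) : ℕ :=
  Nat.card {x : Fin k → R // ∑ i, x i ^ 2 = n}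

variable {R : Type} [CommRing R] [Fintype R] [DecidableEq R]

lemma cnt_eq_card (k : ℕ) (n : R) :
    cnt k R n = (univ.filter fun x : Fin k → R => ∑ i, x i ^ 2 = n).card := by
  classical
  rw [cnt, Nat.card_eq_fintype_card, Fintype.card_subtype]

lemma cnt_conv (j k : ℕ) (n : R) :
    cnt (j + k) R n = ∑ c : R, cnt j R c * cnt k R (n - c) := by
  classical
  have e : {w : (Fin j → R) × (Fin k → R) // (∑ i, w.1 i ^ 2) + (∑ i, w.2 i ^ 2) = n}
      ≃ {x : Fin (j + k) → R // ∑ i, x i ^ 2 = n} :=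
    (Fin.appendEquiv j k).subtypeEquiv (by
      intro w
      rw [show ∑ i, (Fin.appendEquiv j k w) i ^ 2
          = (∑ i, w.1 i ^ 2) + (∑ i, w.2 i ^ 2) by
        simp [Fin.appendEquiv, Fin.sum_univ_add]])
  rw [cnt, ← Nat.card_congr e, Nat.card_eq_fintype_card, Fintype.card_subtype]
  have key : (univ.filter fun w : (Fin j → R) × (Fin k → R) =>
      (∑ i, w.1 i ^ 2) + (∑ i, w.2 i ^ 2) = n).card
      = ∑ c : R, ((univ.filter fun y : Fin j → R => ∑ i, y i ^ 2 = c).card *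
        (univ.filter fun z : Fin k → R => ∑ i, z i ^ 2 = n - c).card) := by
    rw [card_eq_sum_card_fiberwise (f := fun w => ∑ i, w.1 i ^ 2) (t := univ)
      (fun w _ => mem_univ _)]
    refine Finset.sum_congr rfl fun c _ => ?_
    rw [← Finset.card_product]
    congr 1
    ext w
    simp only [mem_filter, mem_univ, true_and, mem_product]
    constructor
    · rintro ⟨h1, h2⟩
      exact ⟨h2, by rw [← h1, ← h2]; ring⟩
    · rintro ⟨h1, h2⟩
      exact ⟨by rw [h1, h2]; ring, h1⟩
  rw [key]
  refine Finset.sum_congr rfl fun c _ => ?_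
  rw [cnt_eq_card, cnt_eq_card]

lemma cnt_total (k : ℕ) : ∑ c : R, cnt k R c = Fintype.card R ^ k := by
  classical
  have : ∑ c : R, cnt k R c
      = ∑ c : R, (univ.filter fun x : Fin k → R => ∑ i, x i ^ 2 = c).card :=
    Finset.sum_congr rfl fun c _ => cnt_eq_card k c
  rw [this, ← card_eq_sum_card_fiberwise (f := fun x : Fin k → R => ∑ i, x i ^ 2)
    (t := univ) (fun x _ => mem_univ _), card_univ, Fintype.card_fun, Fintype.card_fin]

section PrimeField

variable (p : ℕ) [Fact p.Prime]

local notation "F" => ZMod p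

lemma ringChar_F_ne_two (hp2 : p ≠ 2) : ringChar (ZMod p) ≠ 2 := by
  rw [ZMod.ringChar_zmod_n]; exact hp2

lemma cnt_one (hp2 : p ≠ 2) (a : F) : (cnt 1 (ZMod p) a : ℤ) = quadraticChar (ZMod p) a + 1 := by
  classical
  rw [← quadraticChar_card_sqrts (ringChar_F_ne_two p hp2) a]
  norm_cast
  rw [cnt_eq_card]
  apply Finset.card_bij (fun x _ => x 0)
  · intro x hx
    simp only [Finset.mem_filter, Finset.mem_univ, true_and] at hx ⊢
    simp only [Set.toFinset_setOf, Finset.mem_filter, Finset.mem_univ, true_and]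
    simpa using hx
  · intro x hx y hy h
    funext i
    rw [Fin.fin_one_eq_zero i]; exact h
  · intro b hb
    refine ⟨fun _ => b, ?_, rfl⟩
    simp only [Set.toFinset_setOf, Finset.mem_filter, Finset.mem_univ, true_and] at hb
    simp [hb]

lemma quad_sum_shift (hp2 : p ≠ 2) (c : F) :
    ∑ a : F, quadraticChar (ZMod p) (c - a) = 0 := by
  rw [Fintype.sum_equiv (Equiv.subLeft c) (fun a => quadraticChar (ZMod p) (c - a))
    (fun b => quadraticChar (ZMod p) b) (fun a => rfl)]
  exact quadraticChar_sum_zero (ringChar_F_ne_two p hp2)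

lemma jacobi_eval (hp2 : p ≠ 2) (c : F) :
    ∑ a : F, quadraticChar (ZMod p) a * quadraticChar (ZMod p) (c - a) =
      if c = 0 then (quadraticChar (ZMod p) (-1)) * ((p : ℤ) - 1)
      else -(quadraticChar (ZMod p) (-1)) := by
  classical
  by_cases hc : c = 0
  · subst hc
    simp only [if_pos rfl]
    have h1 : ∀ a : F, quadraticChar (ZMod p) a * quadraticChar (ZMod p) (0 - a)
        = quadraticChar (ZMod p) (-1) * (quadraticChar (ZMod p) a) ^ 2 := by
      intro a
      rw [zero_sub, show -a = -1 * a by ring, map_mul]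
      ring
    rw [Finset.sum_congr rfl fun a _ => h1 a, ← Finset.mul_sum]
    congr 1
    have h2 : ∀ a : F, (quadraticChar (ZMod p) a) ^ 2 = if a = 0 then 0 else 1 := by
      intro a
      by_cases h : a = 0
      · simp [h]
      · rw [if_neg h]; exact quadraticChar_sq_one h
    rw [Finset.sum_congr rfl fun a _ => h2 a, Finset.sum_ite, Finset.sum_const_zero,
      Finset.sum_const, nsmul_eq_mul, mul_one, zero_add]
    rw [Finset.filter_ne' Finset.univ 0, Finset.card_erase_of_mem (Finset.mem_univ _),
      Finset.card_univ, ZMod.card]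
    have : 1 ≤ p := (Fact.out : p.Prime).one_lt.le
    push_cast [this]
    ring
  · rw [if_neg hc]
    have hsq := quadraticChar_sq_one hc
    have hstep : ∀ b : F,
        quadraticChar (ZMod p) b * quadraticChar (ZMod p) (1 - b)
          = quadraticChar (ZMod p) ((Equiv.mulLeft₀ c hc) b) *
            quadraticChar (ZMod p) (c - (Equiv.mulLeft₀ c hc) b) := by
      intro b
      have : ((Equiv.mulLeft₀ c hc) b) = c * b := rfl
      rw [this, show c - c * b = c * (1 - b) by ring, map_mul, map_mul]
      linear_combination (-(quadraticChar (ZMod p) b * quadraticChar (ZMod p) (1 - b))) * hsq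
    have key : ∑ a : F, quadraticChar (ZMod p) a * quadraticChar (ZMod p) (c - a)
        = ∑ b : F, quadraticChar (ZMod p) b * quadraticChar (ZMod p) (1 - b) :=
      (Fintype.sum_equiv (Equiv.mulLeft₀ c hc) _ _ hstep).symm
    rw [key]
    have hJ : ∑ b : F, quadraticChar (ZMod p) b * quadraticChar (ZMod p) (1 - b)
        = jacobiSum (quadraticChar (ZMod p)) (quadraticChar (ZMod p)) := rfl
    rw [hJ]
    have hfin := jacobiSum_nontrivial_inv (quadraticChar_ne_one (ringChar_F_ne_two p hp2))
    rwa [(quadraticChar_isQuadratic (ZMod p)).inv] at hfin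

lemma cnt_two (hp2 : p ≠ 2) (c : F) :
    (cnt 2 (ZMod p) c : ℤ) =
      ((p : ℤ) - quadraticChar (ZMod p) (-1)) +
        (if c = 0 then quadraticChar (ZMod p) (-1) * (p : ℤ) else 0) := by
  classical
  have h : cnt 2 (ZMod p) c = ∑ a : F, cnt 1 (ZMod p) a * cnt 1 (ZMod p) (c - a) :=
    cnt_conv 1 1 c
  have h' : (cnt 2 (ZMod p) c : ℤ)
      = ∑ a : F, (cnt 1 (ZMod p) a : ℤ) * (cnt 1 (ZMod p) (c - a) : ℤ) := by
    rw [h]; push_cast; ring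
  rw [h', Finset.sum_congr rfl (fun a _ => by
    rw [cnt_one p hp2, cnt_one p hp2,
      show (quadraticChar (ZMod p) a + 1) * (quadraticChar (ZMod p) (c-a) + 1)
      = quadraticChar (ZMod p) a * quadraticChar (ZMod p) (c-a) + quadraticChar (ZMod p) a
        + quadraticChar (ZMod p) (c-a) + 1 from by ring])]
  rw [Finset.sum_add_distrib, Finset.sum_add_distrib, Finset.sum_add_distrib,
    jacobi_eval p hp2 c, quadraticChar_sum_zero (ringChar_F_ne_two p hp2),
    quad_sum_shift p hp2 c, Finset.sum_const, Finset.card_univ, ZMod.card]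
  by_cases hc : c = 0 <;> simp [hc] <;> ring

lemma cnt_four (hp2 : p ≠ 2) (n : F) :
    (cnt 4 (ZMod p) n : ℤ) = (p:ℤ)^3 - p + (if n = 0 then (p:ℤ)^2 else 0) := by
  classical
  set ε := quadraticChar (ZMod p) (-1) with hε
  have hsq : ε ^ 2 = 1 := quadraticChar_sq_one (neg_ne_zero.mpr one_ne_zero)
  have h : cnt 4 (ZMod p) n = ∑ c : F, cnt 2 (ZMod p) c * cnt 2 (ZMod p) (n - c) :=
    cnt_conv 2 2 n
  have h' : (cnt 4 (ZMod p) n : ℤ)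
      = ∑ c : F, (cnt 2 (ZMod p) c : ℤ) * (cnt 2 (ZMod p) (n - c) : ℤ) := by
    rw [h]; push_cast; ring
  rw [h', Finset.sum_congr rfl (fun c _ => by
    rw [cnt_two p hp2 c, cnt_two p hp2 (n - c)])]
  have expand : ∀ c : F,
      (((p : ℤ) - ε) + (if c = 0 then ε * (p:ℤ) else 0)) *
        (((p : ℤ) - ε) + (if n - c = 0 then ε * (p:ℤ) else 0))
      = ((p:ℤ) - ε)^2 + (if c = 0 then ε * p * ((p:ℤ) - ε) else 0)
        + (if c = n then ((p:ℤ) - ε) * (ε * p) else 0)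
        + (if c = 0 then (if c = n then (ε*p)^2 else 0) else 0) := by
    intro c
    have hnc : (n - c = 0) = (c = n) := by
      rw [sub_eq_zero]; exact propext ⟨fun h => h.symm, fun h => h.symm⟩
    simp only [hnc]
    split_ifs <;> ring
  rw [Finset.sum_congr rfl fun c _ => expand c]
  rw [Finset.sum_add_distrib, Finset.sum_add_distrib, Finset.sum_add_distrib,
    Finset.sum_const, Finset.card_univ, ZMod.card,
    Finset.sum_ite_eq' Finset.univ (0 : F), Finset.sum_ite_eq' Finset.univ n,
    Finset.sum_ite_eq' Finset.univ (0 : F)]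
  simp only [Finset.mem_univ, if_true, nsmul_eq_mul, ite_true]
  by_cases hn : n = 0
  · subst hn
    norm_num
    linear_combination ((p:ℤ)^2 - p) * hsq
  · rw [if_neg hn, if_neg (fun h : (0:F) = n => hn h.symm)]
    linear_combination (-(p:ℤ)) * hsq

lemma cnt_4m (hp2 : p ≠ 2) (m : ℕ) (n : F) :
    (cnt (4*(m+1)) (ZMod p) n : ℤ)
      = (p:ℤ)^(4*m+3) - (p:ℤ)^(2*m+1) + if n = 0 then (p:ℤ)^(2*m+2) else 0 := by
  classical
  induction m generalizing n with
  | zero => simpa using cnt_four p hp2 n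
  | succ m ih =>
    have h : cnt (4*(m+1+1)) (ZMod p) n
        = ∑ c : F, cnt 4 (ZMod p) c * cnt (4*(m+1)) (ZMod p) (n - c) := by
      rw [show 4*(m+1+1) = 4 + 4*(m+1) by ring]
      exact cnt_conv 4 (4*(m+1)) n
    have h' : (cnt (4*(m+1+1)) (ZMod p) n : ℤ)
        = ∑ c : F, (cnt 4 (ZMod p) c : ℤ) * (cnt (4*(m+1)) (ZMod p) (n - c) : ℤ) := by
      rw [h]; push_cast; ring
    have htot : ∑ c : F, (cnt 4 (ZMod p) c : ℤ) = (p:ℤ)^4 := by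
      have := cnt_total (R := ZMod p) 4
      have := congrArg (Nat.cast : ℕ → ℤ) this
      push_cast [ZMod.card] at this
      exact this
    rw [h', Finset.sum_congr rfl (fun c _ => by
      rw [ih (n - c),
        show ((cnt 4 (ZMod p) c : ℤ)) *
          ((p:ℤ)^(4*m+3) - (p:ℤ)^(2*m+1) + if n - c = 0 then (p:ℤ)^(2*m+2) else 0)
        = ((p:ℤ)^(4*m+3) - (p:ℤ)^(2*m+1)) * (cnt 4 (ZMod p) c : ℤ)
          + (if c = n then (p:ℤ)^(2*m+2) * (cnt 4 (ZMod p) c : ℤ) else 0) from by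
          have hnc : (n - c = 0) = (c = n) := by
            rw [sub_eq_zero]; exact propext ⟨fun h => h.symm, fun h => h.symm⟩
          simp only [hnc]; split_ifs <;> ring])]
    rw [Finset.sum_add_distrib, ← Finset.mul_sum, htot,
      Finset.sum_ite_eq' Finset.univ n, if_pos (Finset.mem_univ n), cnt_four p hp2 n]
    by_cases hn : n = 0 <;> simp [hn] <;> ring

end PrimeField

section Affine

variable {K : Type} [Field K] [Fintype K] [DecidableEq K]

lemma card_affine {k : ℕ} (a : Fin k → K) (i0 : Fin k) (h : a i0 ≠ 0) (b c : K) :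
    Nat.card {t : Fin k → K // ∑ i, a i * t i = b}
      = Nat.card {t : Fin k → K // ∑ i, a i * t i = c} := by
  classical
  refine Nat.card_congr ?_
  have key : ∀ d : K, ∀ t : Fin k → K,
      ∑ i, a i * (t i + (if i = i0 then d / a i0 else 0)) = (∑ i, a i * t i) + d := by
    intro d t
    have : ∀ i, a i * (t i + (if i = i0 then d / a i0 else 0))
        = a i * t i + (if i = i0 then a i0 * (d / a i0) else 0) := by
      intro i
      by_cases hi : i = i0 <;> simp [hi] <;> ring
    rw [Finset.sum_congr rfl fun i _ => this i, Finset.sum_add_distrib,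
      Finset.sum_ite_eq' Finset.univ i0, if_pos (Finset.mem_univ i0),
      mul_div_cancel₀ d h]
  refine
    { toFun := fun t => ⟨fun i => t.1 i + (if i = i0 then (c - b) / a i0 else 0), by
        rw [key (c - b) t.1, t.2]; ring⟩
      invFun := fun t => ⟨fun i => t.1 i + (if i = i0 then (b - c) / a i0 else 0), by
        rw [key (b - c) t.1, t.2]; ring⟩
      left_inv := fun t => by
        ext i
        by_cases hi : i = i0 <;> simp [hi] <;> ring
      right_inv := fun t => by
        ext i
        by_cases hi : i = i0 <;> simp [hi] <;> ring }

lemma card_affine_eq {k : ℕ} (a : Fin k → K) (i0 : Fin k) (h : a i0 ≠ 0) (b : K) :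
    Nat.card {t : Fin k → K // ∑ i, a i * t i = b} * Fintype.card K
      = Fintype.card K ^ k := by
  classical
  have h1 : Fintype.card K ^ k = ∑ c : K,
      (Finset.univ.filter fun t : Fin k → K => ∑ i, a i * t i = c).card := by
    rw [← Finset.card_eq_sum_card_fiberwise (f := fun t : Fin k → K => ∑ i, a i * t i)
      (t := Finset.univ) (fun t _ => Finset.mem_univ _), Finset.card_univ,
      Fintype.card_fun, Fintype.card_fin]
  have h2 : ∀ c : K, (Finset.univ.filter fun t : Fin k → K => ∑ i, a i * t i = c).card
      = Nat.card {t : Fin k → K // ∑ i, a i * t i = b} := by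
    intro c
    rw [← Fintype.card_subtype, ← Nat.card_eq_fintype_card]
    exact card_affine a i0 h c b
  rw [h1, Finset.sum_congr rfl fun c _ => h2 c, Finset.sum_const, Finset.card_univ,
    smul_eq_mul, mul_comm]

lemma card_affine_final {k : ℕ} (hk : 0 < k) (a : Fin k → K) (i0 : Fin k) (h : a i0 ≠ 0)
    (b : K) :
    Nat.card {t : Fin k → K // ∑ i, a i * t i = b} = Fintype.card K ^ (k - 1) := by
  have h1 := card_affine_eq a i0 h b
  have h2 : Fintype.card K ^ k = Fintype.card K ^ (k - 1) * Fintype.card K := by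
    rw [← pow_succ, Nat.sub_add_cancel hk]
  rw [h2] at h1
  exact Nat.eq_of_mul_eq_mul_right Fintype.card_pos h1

section Hensel

variable (p e : ℕ) [Fact p.Prime]

local notation "q1" => p ^ (e + 1)
local notation "q0" => p ^ e

noncomputable def iota (t : ZMod p) : ZMod q1 :=
  (t.val : ZMod q1) * (p : ZMod q1) ^ e

lemma hp_pos : 0 < p := (Fact.out : p.Prime).pos

lemma hq1_zero : ((p : ZMod q1)) ^ (e + 1) = 0 := by
  rw [← Nat.cast_pow, ZMod.natCast_self]

lemma iota_natCast (a : ℕ) :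
    iota p e ((a : ZMod p)) = (a : ZMod q1) * (p : ZMod q1) ^ e := by
  rw [iota, ZMod.val_natCast]
  have h2 : ((a : ℕ) : ZMod q1) = ((p * (a / p) + a % p : ℕ) : ZMod q1) := by
    rw [Nat.div_add_mod a p]
  rw [h2]
  push_cast
  linear_combination (-((a / p : ℕ) : ZMod q1)) * hq1_zero p e

lemma iota_add (s t : ZMod p) : iota p e (s + t) = iota p e s + iota p e t := by
  haveI : NeZero p := ⟨(hp_pos p).ne'⟩
  have hs : ((s.val : ℕ) : ZMod p) = s := ZMod.natCast_zmod_val s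
  have ht : ((t.val : ℕ) : ZMod p) = t := ZMod.natCast_zmod_val t
  have h1 : s + t = ((s.val + t.val : ℕ) : ZMod p) := by push_cast [hs, ht]; ring
  rw [h1, iota_natCast, iota, iota]
  push_cast
  ring

noncomputable def iotaHom : ZMod p →+ ZMod q1 :=
  AddMonoidHom.mk' (iota p e) (iota_add p e)

lemma iota_mul_iota (he : 1 ≤ e) (s t : ZMod p) : iota p e s * iota p e t = 0 := by
  have h : ((p : ZMod q1)) ^ e * ((p : ZMod q1)) ^ e = 0 := by
    have key : ((p : ZMod q1)) ^ e * ((p : ZMod q1)) ^ e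
        = ((p : ZMod q1)) ^ (e + 1) * ((p : ZMod q1)) ^ (e - 1) := by
      rw [← pow_add, ← pow_add]
      congr 1
      omega
    rw [key, hq1_zero p e, zero_mul]
  rw [iota, iota]
  linear_combination ((s.val : ZMod q1) * (t.val : ZMod q1)) * h

lemma mul_iota (c : ZMod q1) (t : ZMod p) :
    c * iota p e t = iota p e (((c.val : ℕ) : ZMod p) * t) := by
  haveI : NeZero p := ⟨(hp_pos p).ne'⟩
  haveI : NeZero (q1) := ⟨pow_ne_zero _ (hp_pos p).ne'⟩
  have ht : ((t.val : ℕ) : ZMod p) = t := ZMod.natCast_zmod_val t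
  have hc : ((c.val : ℕ) : ZMod q1) = c := ZMod.natCast_zmod_val c
  have h1 : ((c.val : ℕ) : ZMod p) * t = ((c.val * t.val : ℕ) : ZMod p) := by
    push_cast [ht]; ring
  rw [h1, iota_natCast, iota]
  push_cast [hc]
  ring

lemma iota_eq_zero_iff (t : ZMod p) : iota p e t = 0 ↔ t = 0 := by
  haveI : NeZero p := ⟨(hp_pos p).ne'⟩
  constructor
  · intro h
    rw [iota, ← Nat.cast_pow, ← Nat.cast_mul, ZMod.natCast_eq_zero_iff,
      pow_succ'] at h
    have hpe : 0 < p ^ e := Nat.pow_pos (hp_pos p)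
    have hdvd : p ∣ t.val := (Nat.mul_dvd_mul_iff_right hpe).mp h
    have hlt : t.val < p := t.val_lt
    have hv : t.val = 0 := by
      rcases Nat.eq_zero_or_pos t.val with h0 | h0
      · exact h0
      · exact absurd (Nat.le_of_dvd h0 hdvd) (not_le.mpr hlt)
    rwa [← ZMod.val_eq_zero]
  · rintro rfl
    simp [iota]

noncomputable def kap (z : ZMod q1) : ZMod p := ((z.val / p ^ e : ℕ) : ZMod p)

lemma iota_injective : Function.Injective (iota p e) := by
  have : ∀ a : ZMod p, iota p e a = 0 → a = 0 := fun a ha => (iota_eq_zero_iff p e a).mp ha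
  exact (injective_iff_map_eq_zero (iotaHom p e)).mpr this

lemma kap_iota (t : ZMod p) : kap p e (iota p e t) = t := by
  haveI : NeZero p := ⟨(hp_pos p).ne'⟩
  have hpe : 0 < p ^ e := Nat.pow_pos (hp_pos p)
  have h1 : (iota p e t) = ((t.val * p ^ e : ℕ) : ZMod q1) := by
    rw [iota]; push_cast; ring
  have hlt : t.val * p ^ e < p ^ (e + 1) := by
    have h2 : t.val < p := t.val_lt
    calc t.val * p ^ e < p * p ^ e := (Nat.mul_lt_mul_right hpe).mpr h2
    _ = p ^ (e + 1) := by rw [pow_succ']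
  rw [kap, h1, ZMod.val_natCast, Nat.mod_eq_of_lt hlt, Nat.mul_div_cancel _ hpe]
  exact ZMod.natCast_zmod_val t

lemma iota_kap (z : ZMod q1) (hz : ((z.val : ℕ) : ZMod q0) = 0) :
    iota p e (kap p e z) = z := by
  haveI : NeZero p := ⟨(hp_pos p).ne'⟩
  haveI : NeZero (q1) := ⟨pow_ne_zero _ (hp_pos p).ne'⟩
  have hpe : 0 < p ^ e := Nat.pow_pos (hp_pos p)
  rw [ZMod.natCast_eq_zero_iff] at hz
  obtain ⟨c, hc⟩ := hz
  rw [kap, hc, Nat.mul_div_cancel_left c hpe, iota_natCast]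
  have h2 : ((p ^ e * c : ℕ) : ZMod q1) = z := by rw [← hc]; exact ZMod.natCast_zmod_val z
  rw [← h2]; push_cast; ring

lemma pi_iota (t : ZMod p) :
    (ZMod.castHom (pow_dvd_pow p (Nat.le_succ e)) (ZMod q0)) (iota p e t) = 0 := by
  haveI : NeZero p := ⟨(hp_pos p).ne'⟩
  have h1 : (iota p e t) = ((t.val * p ^ e : ℕ) : ZMod q1) := by
    rw [iota]; push_cast; ring
  rw [h1, map_natCast]
  push_cast
  rw [← Nat.cast_pow, ZMod.natCast_self, mul_zero]

lemma pi1_iota (he : 1 ≤ e) (t : ZMod p) :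
    (ZMod.castHom (dvd_pow_self p (Nat.succ_ne_zero e)) (ZMod p)) (iota p e t) = 0 := by
  haveI : NeZero p := ⟨(hp_pos p).ne'⟩
  have h1 : (iota p e t) = ((t.val * p ^ e : ℕ) : ZMod q1) := by
    rw [iota]; push_cast; ring
  rw [h1, map_natCast]
  push_cast
  rw [ZMod.natCast_self, zero_pow (by omega : e ≠ 0), mul_zero]

lemma iota_sum {ι : Type} (s : Finset ι) (f : ι → ZMod p) :
    iota p e (∑ i ∈ s, f i) = ∑ i ∈ s, iota p e (f i) :=
  map_sum (iotaHom p e) f s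

lemma iota_neg (x : ZMod p) : iota p e (-x) = - iota p e x :=
  map_neg (iotaHom p e) x

open Finset in
lemma cnt_hensel (he : 1 ≤ e) (hp2 : p ≠ 2) (k : ℕ) (hk : 0 < k) (n : ℤ)
    (hn : ¬ (p : ℤ) ∣ n) :
    cnt k (ZMod q1) ((n : ZMod q1)) = p ^ (k - 1) * cnt k (ZMod q0) ((n : ZMod q0)) := by
  classical
  haveI hNp : NeZero p := ⟨(hp_pos p).ne'⟩
  haveI : NeZero (q0) := ⟨pow_ne_zero _ (hp_pos p).ne'⟩
  haveI : NeZero (q1) := ⟨pow_ne_zero _ (hp_pos p).ne'⟩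
  set π := ZMod.castHom (pow_dvd_pow p (Nat.le_succ e)) (ZMod q0) with hπ
  set π1 := ZMod.castHom (dvd_pow_self p (Nat.succ_ne_zero e)) (ZMod p) with hπ1
  rw [cnt_eq_card, cnt_eq_card]
  have hmaps : ∀ x ∈ (univ.filter fun x : Fin k → ZMod q1 => ∑ i, x i ^ 2 = ((n : ℤ) : ZMod q1)),
      (fun i => π (x i)) ∈ (univ.filter fun y : Fin k → ZMod q0 => ∑ i, y i ^ 2 = ((n : ℤ) : ZMod q0)) := by
    intro x hx
    simp only [Finset.mem_filter, Finset.mem_univ, true_and] at hx ⊢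
    rw [← map_intCast π n, ← hx, map_sum]
    exact Finset.sum_congr rfl fun i _ => (map_pow π (x i) 2).symm
  rw [Finset.card_eq_sum_card_fiberwise hmaps]
  have hfib : ∀ y ∈ (univ.filter fun y : Fin k → ZMod q0 => ∑ i, y i ^ 2 = ((n : ℤ) : ZMod q0)),
      ((univ.filter fun x : Fin k → ZMod q1 => ∑ i, x i ^ 2 = ((n : ℤ) : ZMod q1)).filter
        fun x => (fun i => π (x i)) = y).card = p ^ (k - 1) := by
    intro y hy
    simp only [Finset.mem_filter, Finset.mem_univ, true_and] at hy
    set xh : Fin k → ZMod q1 := fun i => (((y i).val : ℕ) : ZMod q1) with hxh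
    set a : Fin k → ZMod p := fun i => (((xh i).val : ℕ) : ZMod p) with ha
    set z : ZMod q1 := (∑ i, xh i ^ 2) - ((n : ℤ) : ZMod q1) with hz
    set u : ZMod p := kap p e z with hu'
    have Fcast : ∀ w : ZMod q1, π w = ((w.val : ℕ) : ZMod q0) := by
      intro w
      rw [hπ, ZMod.castHom_apply, ZMod.cast_eq_val]
    have Fcast1 : ∀ w : ZMod q1, π1 w = ((w.val : ℕ) : ZMod p) := by
      intro w
      rw [hπ1, ZMod.castHom_apply, ZMod.cast_eq_val]
    have Fπxh : ∀ i, π (xh i) = y i := by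
      intro i
      rw [hxh]
      simp only [map_natCast]
      exact ZMod.natCast_zmod_val (y i)
    have Fz : ((z.val : ℕ) : ZMod q0) = 0 := by
      rw [← Fcast z, hz, map_sub, map_sum, map_intCast]
      have hterm : ∀ i, π (xh i ^ 2) = y i ^ 2 := fun i => by rw [map_pow, Fπxh i]
      rw [Finset.sum_congr rfl fun i _ => hterm i, hy, sub_self]
    have Fu : iota p e u = z := iota_kap p e z Fz
    have Fa : ∀ i, a i = π1 (xh i) := fun i => (Fcast1 (xh i)).symm
    have hsuma : ∑ i, a i ^ 2 = ((n : ℤ) : ZMod p) := by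
      have h1 : ∑ i, a i ^ 2 = π1 (∑ i, xh i ^ 2) := by
        rw [map_sum]
        exact Finset.sum_congr rfl fun i _ => by rw [Fa i, map_pow]
      have h2 : (∑ i, xh i ^ 2) = z + ((n : ℤ) : ZMod q1) := by rw [hz]; ring
      rw [h1, h2, map_add, map_intCast, ← Fu, pi1_iota p e he, zero_add]
    have hn0 : ((n : ℤ) : ZMod p) ≠ 0 := by
      rw [Ne, ZMod.intCast_zmod_eq_zero_iff_dvd]; exact hn
    have hex : ∃ i0, a i0 ≠ 0 := by
      by_contra hcon
      push_neg at hcon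
      rw [Finset.sum_congr rfl (fun i _ =>
        show a i ^ 2 = 0 by rw [hcon i]; exact zero_pow two_ne_zero)] at hsuma
      simp only [Finset.sum_const_zero] at hsuma
      exact hn0 hsuma.symm
    obtain ⟨i0, hi0⟩ := hex
    have h2ne : (2 : ZMod p) ≠ 0 := by
      have hnd : ¬ p ∣ 2 := by
        rw [Nat.prime_dvd_prime_iff_eq Fact.out Nat.prime_two]; exact hp2
      intro hcontra
      rw [show (2 : ZMod p) = ((2 : ℕ) : ZMod p) by norm_cast,
        ZMod.natCast_eq_zero_iff] at hcontra
      exact hnd hcontra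
    have hcoef : (2 * a i0) ≠ 0 := mul_ne_zero h2ne hi0
    have hrwsum : ∑ i, xh i ^ 2 = iota p e u + ((n : ℤ) : ZMod q1) := by
      rw [Fu, hz]; ring
    have sub1 : ∀ t : Fin k → ZMod p,
        (∑ i, (xh i + iota p e (t i)) ^ 2 = ((n : ℤ) : ZMod q1)) ↔
          ∑ i, (2 * a i) * t i = -u := by
      intro t
      have expand : ∀ i, (xh i + iota p e (t i)) ^ 2
          = xh i ^ 2 + iota p e ((2 * a i) * (t i)) := by
        intro i
        have e1 : (xh i + iota p e (t i)) ^ 2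
            = xh i ^ 2 + (xh i * iota p e (t i) + xh i * iota p e (t i))
              + iota p e (t i) * iota p e (t i) := by ring
        rw [e1, iota_mul_iota p e he, add_zero, mul_iota p e (xh i) (t i), ← iota_add]
        congr 2
        have haa : (((xh i).val : ℕ) : ZMod p) = a i := by simp only [ha]
        rw [haa]
        ring
      rw [Finset.sum_congr rfl fun i _ => expand i, Finset.sum_add_distrib,
        ← iota_sum p e, hrwsum]
      constructor
      · intro h
        have h0 : iota p e (u + ∑ i, (2 * a i) * t i) = 0 := by
          rw [iota_add]
          linear_combination h
        have h1 : u + ∑ i, (2 * a i) * t i = 0 := (iota_eq_zero_iff p e _).mp h0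
        linear_combination h1
      · intro h
        rw [h, iota_neg]
        ring
    have sub2 : ∀ t : ZMod p, ∀ i, π (xh i + iota p e t) = y i := fun t i => by
      rw [map_add, Fπxh i, pi_iota p e t, add_zero]
    have sub3 : ∀ x : Fin k → ZMod q1, ((fun i => π (x i)) = y) → ∀ i,
        xh i + iota p e (kap p e (x i - xh i)) = x i := by
      intro x hx i
      have hzz : (((x i - xh i).val : ℕ) : ZMod q0) = 0 := by
        rw [← Fcast (x i - xh i), map_sub, Fπxh i]
        have hxi : π (x i) = y i := congrFun hx i
        rw [hxi, sub_self]
      rw [iota_kap p e _ hzz]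
      ring
    rw [Finset.filter_filter]
    have hcard1 : (univ.filter fun x : Fin k → ZMod q1 =>
        (∑ i, x i ^ 2 = ((n : ℤ) : ZMod q1)) ∧ ((fun i => π (x i)) = y)).card
        = Nat.card {x : Fin k → ZMod q1 //
            (∑ i, x i ^ 2 = ((n : ℤ) : ZMod q1)) ∧ ((fun i => π (x i)) = y)} := by
      rw [Nat.card_eq_fintype_card, Fintype.card_subtype]
    rw [hcard1]
    have E0 : {t : Fin k → ZMod p // ∑ i, (2 * a i) * t i = -u} ≃
        {x : Fin k → ZMod q1 //
          (∑ i, x i ^ 2 = ((n : ℤ) : ZMod q1)) ∧ ((fun i => π (x i)) = y)} :=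
      { toFun := fun t => ⟨fun i => xh i + iota p e (t.1 i),
          ⟨(sub1 t.1).mpr t.2, funext fun i => sub2 (t.1 i) i⟩⟩
        invFun := fun x => ⟨fun i => kap p e (x.1 i - xh i), by
          apply (sub1 _).mp
          have hre : ∑ i, (xh i + iota p e (kap p e (x.1 i - xh i))) ^ 2 = ∑ i, x.1 i ^ 2 :=
            Finset.sum_congr rfl fun i _ => by rw [sub3 x.1 x.2.2 i]
          rw [hre, x.2.1]⟩
        left_inv := fun t => by
          apply Subtype.ext
          funext i
          show kap p e (xh i + iota p e (t.1 i) - xh i) = t.1 i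
          rw [add_sub_cancel_left, kap_iota]
        right_inv := fun x => by
          apply Subtype.ext
          funext i
          exact sub3 x.1 x.2.2 i }
    rw [← Nat.card_congr E0, card_affine_final hk (fun i => 2 * a i) i0 hcoef (-u),
      ZMod.card]
  rw [Finset.sum_congr rfl hfib, Finset.sum_const, smul_eq_mul, mul_comm]

end Hensel

section CRT

lemma cnt_congr {R S : Type} [CommRing R] [CommRing S] (e : R ≃+* S) (k : ℕ) (n : R) :
    cnt k R n = cnt k S (e n) := by
  apply Nat.card_congr
  refine (Equiv.piCongrRight fun _ : Fin k => e.toEquiv).subtypeEquiv fun x => ?_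
  have hmap : ∑ i, ((Equiv.piCongrRight fun _ : Fin k => e.toEquiv) x) i ^ 2
      = e (∑ i, x i ^ 2) := by
    rw [map_sum]
    exact Finset.sum_congr rfl fun i _ => (map_pow e (x i) 2).symm
  rw [hmap]
  exact ⟨fun h => by rw [h], fun h => e.injective h⟩

lemma cnt_prod {A B : Type} [CommRing A] [CommRing B] (k : ℕ) (nA : A) (nB : B) :
    cnt k (A × B) (nA, nB) = cnt k A nA * cnt k B nB := by
  rw [cnt, cnt, cnt, ← Nat.card_prod]
  apply Nat.card_congr
  refine
    { toFun := fun x => (⟨fun i => (x.1 i).1, ?_⟩, ⟨fun i => (x.1 i).2, ?_⟩)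
      invFun := fun s => ⟨fun i => (s.1.1 i, s.2.1 i), ?_⟩
      left_inv := fun x => by apply Subtype.ext; funext i; rfl
      right_inv := fun s => by
        refine Prod.ext ?_ ?_ <;> (apply Subtype.ext; funext i; rfl) }
  · have h := congrArg Prod.fst x.2
    simp only [Prod.fst_sum, Prod.pow_fst] at h
    simpa using h
  · have h := congrArg Prod.snd x.2
    simp only [Prod.snd_sum, Prod.pow_snd] at h
    simpa using h
  · have h1 := s.1.2
    have h2 := s.2.2
    refine Prod.ext ?_ ?_
    · simp only [Prod.fst_sum, Prod.pow_fst]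
      simpa using h1
    · simp only [Prod.snd_sum, Prod.pow_snd]
      simpa using h2

lemma cnt_crt (k a b : ℕ) (hab : Nat.Coprime a b) (n : ℤ) :
    cnt k (ZMod (a * b)) ((n : ZMod (a * b)))
      = cnt k (ZMod a) ((n : ZMod a)) * cnt k (ZMod b) ((n : ZMod b)) := by
  rw [cnt_congr (ZMod.chineseRemainder hab) k]
  have hcast : (ZMod.chineseRemainder hab) ((n : ZMod (a * b)))
      = ((n : ZMod a), (n : ZMod b)) := by
    rw [map_intCast]
    exact Prod.ext (Prod.fst_intCast n) (Prod.snd_intCast n)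
  rw [hcast, cnt_prod]

end CRT

section Assemble

lemma cnt_prime_pow (p : ℕ) [Fact p.Prime] (hp2 : p ≠ 2) (m j : ℕ) (hm : 0 < m)
    (n : ℤ) (hn : ¬ (p : ℤ) ∣ n) :
    (cnt (4*m) (ZMod (p^(j+1))) ((n : ZMod (p^(j+1)))) : ℤ)
      = (p:ℤ)^(j*(4*m-1)) * ((p:ℤ)^(4*m-1) - (p:ℤ)^(2*m-1)) := by
  induction j with
  | zero =>
    obtain ⟨mm, rfl⟩ : ∃ mm, m = mm + 1 := ⟨m - 1, by omega⟩
    have hne : ((n : ℤ) : ZMod p) ≠ 0 := by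
      rw [Ne, ZMod.intCast_zmod_eq_zero_iff_dvd]; exact hn
    have h := cnt_4m p hp2 mm ((n : ZMod p))
    rw [if_neg hne, add_zero] at h
    rw [show (4*(mm+1)-1) = 4*mm+3 by omega, show (2*(mm+1)-1) = 2*mm+1 by omega,
      Nat.zero_mul, pow_zero, one_mul]
    rw [show p^(0+1) = p by ring]
    exact h
  | succ j ih =>
    have hs := cnt_hensel p (j+1) (by omega) hp2 (4*m) (by omega) n hn
    have hs' : (cnt (4*m) (ZMod (p^(j+1+1))) ((n : ZMod (p^(j+1+1)))) : ℤ)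
        = (p:ℤ)^(4*m-1) * (cnt (4*m) (ZMod (p^(j+1))) ((n : ZMod (p^(j+1)))) : ℤ) := by
      rw [hs]; push_cast; ring
    rw [hs', ih, show (j+1)*(4*m-1) = (4*m-1) + j*(4*m-1) by ring, pow_add]
    ring

lemma real_prime_pow (p : ℕ) [Fact p.Prime] (hp2 : p ≠ 2) (m j : ℕ) (hm : 0 < m)
    (n : ℤ) (hn : ¬ (p : ℤ) ∣ n) :
    ((cnt (4*m) (ZMod (p^(j+1))) ((n : ZMod (p^(j+1))))) : ℝ)
      = ((p^(j+1) : ℕ) : ℝ)^(4*m-1) * (1 - 1/(p:ℝ)^(2*m)) := by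
  obtain ⟨mm, rfl⟩ : ∃ mm, m = mm + 1 := ⟨m - 1, by omega⟩
  have hz := cnt_prime_pow p hp2 (mm+1) j hm n hn
  have hr : ((cnt (4*(mm+1)) (ZMod (p^(j+1))) ((n : ZMod (p^(j+1))))) : ℝ)
      = (p:ℝ)^(j*(4*(mm+1)-1)) * ((p:ℝ)^(4*(mm+1)-1) - (p:ℝ)^(2*(mm+1)-1)) := by
    exact_mod_cast congrArg (Int.cast : ℤ → ℝ) hz
  rw [hr]
  have hp0 : (p:ℝ) ≠ 0 := Nat.cast_ne_zero.mpr (Fact.out : p.Prime).pos.ne'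
  rw [show (4*(mm+1)-1) = 4*mm+3 by omega, show (2*(mm+1)-1) = 2*mm+1 by omega,
    show (2*(mm+1)) = 2*mm+2 by omega]
  push_cast
  rw [← pow_mul, show (j+1)*(4*mm+3) = j*(4*mm+3) + (4*mm+3) by ring, pow_add,
    show (4*mm+3) = (2*mm+1) + (2*mm+2) by ring, pow_add]
  have hD : (p:ℝ)^(2*mm+2) ≠ 0 := pow_ne_zero _ hp0
  field_simp
  ring

lemma cnt_mod_one (k : ℕ) (x : ZMod 1) : cnt k (ZMod 1) x = 1 := by
  rw [cnt]
  have h : ∀ y : Fin k → ZMod 1, ∑ i, y i ^ 2 = x := fun y => Subsingleton.elim _ _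
  rw [Nat.card_congr (Equiv.subtypeUnivEquiv h), Nat.card_eq_fintype_card,
    Fintype.card_fun]
  simp

lemma key_formula (m : ℕ) (hm : 0 < m) (n : ℤ) :
    ∀ r : ℕ, Odd r → IsCoprime n (r : ℤ) →
      ((cnt (4*m) (ZMod r) ((n : ZMod r))) : ℝ)
        = (r:ℝ)^(4*m-1) * ∏ p ∈ r.primeFactors, (1 - 1/(p:ℝ)^(2*m)) := by
  intro r
  induction r using Nat.recOnPosPrimePosCoprime with
  | prime_pow p j hp hj =>
    intro hodd hcop
    haveI : Fact p.Prime := ⟨hp⟩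
    have hp2 : p ≠ 2 := by
      rintro rfl
      rw [Nat.odd_iff] at hodd
      have : 2 ∣ 2^j := dvd_pow_self 2 hj.ne'
      omega
    have hn' : ¬ (p : ℤ) ∣ n := by
      intro hd
      have h1 : IsCoprime n ((p:ℤ)^j) := by
        have : (((p^j : ℕ)) : ℤ) = (p:ℤ)^j := by push_cast; ring
        rwa [this] at hcop
      have h2 : (p:ℤ) ∣ (p:ℤ)^j := dvd_pow_self _ hj.ne'
      have h3 : IsUnit ((p:ℤ)) := h1.isUnit_of_dvd' hd h2
      rw [Int.isUnit_iff] at h3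
      have := (Fact.out : p.Prime).two_le
      omega
    obtain ⟨jj, rfl⟩ : ∃ jj, j = jj + 1 := ⟨j - 1, by omega⟩
    rw [real_prime_pow p hp2 m jj hm n hn']
    congr 1
    rw [Nat.primeFactors_pow p (by omega : jj + 1 ≠ 0), Nat.Prime.primeFactors Fact.out,
      Finset.prod_singleton]
  | zero =>
    intro hodd
    exact absurd hodd (by decide)
  | one =>
    intro _ _
    rw [cnt_mod_one]
    simp
  | coprime a b ha hb hab iha ihb =>
    intro hodd hcop
    have ha0 : a ≠ 0 := by omega
    have hb0 : b ≠ 0 := by omega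
    have hodda : Odd a := (Nat.odd_mul.mp hodd).1
    have hoddb : Odd b := (Nat.odd_mul.mp hodd).2
    have hcast : (((a*b : ℕ)) : ℤ) = (a:ℤ) * (b:ℤ) := by push_cast; ring
    rw [hcast] at hcop
    have hcopa : IsCoprime n (a:ℤ) := hcop.of_mul_right_left
    have hcopb : IsCoprime n (b:ℤ) := hcop.of_mul_right_right
    rw [cnt_crt (4*m) a b hab n]
    push_cast
    rw [iha hodda hcopa, ihb hoddb hcopb,
      Nat.primeFactors_mul ha0 hb0, Finset.prod_union (Nat.Coprime.disjoint_primeFactors hab)]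
    ring

end Assemble


theorem count_sum_of_squares_4m_coprime (m r : ℕ) (hm : 0 < m) (hr : 0 < r) (hodd : Odd r)
    (n : ℤ) (hn : IsCoprime n (r : ℤ)) :
    (Nat.card {x : Fin (4 * m) → ZMod r // ∑ i, (x i) ^ 2 = (n : ZMod r)} : ℝ) =
        (r : ℝ) ^ (2 * m - 1) * jordanTotient (2 * m) r ∧
      (Nat.card {x : Fin (4 * m) → ZMod r // ∑ i, (x i) ^ 2 = (n : ZMod r)} : ℝ) =
        (r : ℝ) ^ (4 * m - 1) * ∏ p ∈ r.primeFactors, (1 - 1 / (p : ℝ) ^ (2 * m)) := by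
  have h2 : ((cnt (4*m) (ZMod r) ((n : ZMod r))) : ℝ)
      = (r:ℝ)^(4*m-1) * ∏ p ∈ r.primeFactors, (1 - 1/(p:ℝ)^(2*m)) :=
    key_formula m hm n r hodd hn
  constructor
  · show ((cnt (4*m) (ZMod r) ((n : ZMod r))) : ℝ) = _
    rw [h2, jordanTotient, ← mul_assoc, ← pow_add, show 2*m-1+2*m = 4*m-1 by omega]
  · exact h2
end Affine
end

section
/- For every odd positive integer r, the number of solutions of x² + y² ≡ 0 (mod r) in (ℤ/rℤ)² equals r · ∑_{d|r} (-1)^{(d-1)/2} · φ(d)/d, where φ is Euler's totient. -/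
open Finset

lemma card_val_dvd {n m : ℕ} (hn : 0 < n) (hm : m ∣ n) :
    Nat.card {u : ZMod n // m ∣ u.val} = n / m := by
  haveI : NeZero n := ⟨hn.ne'⟩
  have hm0 : 0 < m := Nat.pos_of_dvd_of_pos hm hn
  have hlt : ∀ j : Fin (n / m), m * (j : ℕ) < n := fun j =>
    calc m * (j : ℕ) < m * (n / m) := (Nat.mul_lt_mul_left hm0).mpr j.2
      _ = n := Nat.mul_div_cancel' hm
  have e : {u : ZMod n // m ∣ u.val} ≃ Fin (n / m) :=
    { toFun := fun u => ⟨u.1.val / m, Nat.div_lt_div_of_lt_of_dvd hm (ZMod.val_lt u.1)⟩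
      invFun := fun j => ⟨((m * j : ℕ) : ZMod n), by
        rw [ZMod.val_cast_of_lt (hlt j)]; exact Dvd.intro _ rfl⟩
      left_inv := fun u => Subtype.ext (by
        show ((m * (u.1.val / m) : ℕ) : ZMod n) = u.1
        rw [Nat.mul_div_cancel' u.2, ZMod.natCast_zmod_val])
      right_inv := fun j => Fin.ext (by
        show (((m * j : ℕ) : ZMod n)).val / m = j
        rw [ZMod.val_cast_of_lt (hlt j), Nat.mul_div_cancel_left _ hm0]) }
  rw [Nat.card_congr e, Nat.card_eq_fintype_card, Fintype.card_fin]

lemma card_ann {n : ℕ} (hn : 0 < n) (v : ZMod n) :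
    Nat.card {u : ZMod n // u * v = 0} = Nat.gcd v.val n := by
  haveI : NeZero n := ⟨hn.ne'⟩
  set g := Nat.gcd v.val n with hg
  have hg0 : 0 < g := Nat.gcd_pos_of_pos_right _ hn
  have hgn : g ∣ n := Nat.gcd_dvd_right _ _
  have hgv : g ∣ v.val := Nat.gcd_dvd_left _ _
  have key : ∀ u : ZMod n, (u * v = 0 ↔ (n / g) ∣ u.val) := by
    intro u
    have h1 : u * v = ((u.val * v.val : ℕ) : ZMod n) := by
      push_cast [ZMod.natCast_zmod_val]; ring
    rw [h1, ZMod.natCast_eq_zero_iff]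
    constructor
    · intro h
      have h2 : n / g * g ∣ u.val * (v.val / g) * g := by
        rw [mul_assoc, Nat.div_mul_cancel hgv, Nat.div_mul_cancel hgn]; exact h
      have h3 : (n / g) ∣ u.val * (v.val / g) := (mul_dvd_mul_iff_right hg0.ne').mp h2
      exact (Nat.coprime_div_gcd_div_gcd hg0).symm.dvd_of_dvd_mul_right h3
    · intro h
      calc n = (n / g) * g := (Nat.div_mul_cancel hgn).symm
        _ ∣ u.val * v.val := mul_dvd_mul h hgv
  rw [Nat.card_congr (Equiv.subtypeEquivRight key), card_val_dvd hn (Nat.div_dvd_of_dvd hgn),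
    Nat.div_div_self hgn hn.ne']

lemma card_mul_zero {n : ℕ} (hn : 0 < n) :
    Nat.card {p : ZMod n × ZMod n // p.1 * p.2 = 0}
      = ∑ d ∈ n.divisors, Nat.totient (n / d) * d := by
  haveI : NeZero n := ⟨hn.ne'⟩
  have e : {p : ZMod n × ZMod n // p.1 * p.2 = 0}
      ≃ (v : ZMod n) × {u : ZMod n // u * v = 0} :=
    { toFun := fun p => ⟨p.1.2, p.1.1, p.2⟩
      invFun := fun q => ⟨(q.2.1, q.1), q.2.2⟩
      left_inv := fun p => rfl
      right_inv := fun q => rfl }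
  rw [Nat.card_congr e, Nat.card_eq_fintype_card, Fintype.card_sigma]
  simp_rw [← Nat.card_eq_fintype_card, card_ann hn]
  have hrange : ∑ v : ZMod n, Nat.gcd v.val n = ∑ j ∈ range n, Nat.gcd j n := by
    rw [← Fin.sum_univ_eq_sum_range]
    exact Fintype.sum_bijective (fun v : ZMod n => (⟨v.val, ZMod.val_lt v⟩ : Fin n))
      ⟨fun a b hab => ZMod.val_injective n (congrArg Fin.val hab),
        fun j => ⟨(j : ZMod n), Fin.ext (ZMod.val_cast_of_lt j.2)⟩⟩
      _ _ (fun v => rfl)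
  rw [hrange]
  rw [← Finset.sum_fiberwise_of_maps_to (g := fun j => Nat.gcd j n) (t := n.divisors)
      (fun j _ => Nat.mem_divisors.mpr ⟨Nat.gcd_dvd_right _ _, hn.ne'⟩)]
  refine Finset.sum_congr rfl fun d hd => ?_
  obtain ⟨hdn, -⟩ := Nat.mem_divisors.mp hd
  have hd0 : 0 < d := Nat.pos_of_dvd_of_pos hdn hn
  have hcard : ({j ∈ range n | Nat.gcd j n = d}).card = Nat.totient (n / d) := by
    rw [Nat.totient_eq_card_coprime]
    apply Finset.card_nbij' (i := fun j => j / d) (j := fun a => d * a)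
    · intro j hj
      simp only [mem_coe, mem_filter, mem_range] at hj ⊢
      obtain ⟨hjn, hjg⟩ := hj
      have hdj : d ∣ j := hjg ▸ Nat.gcd_dvd_left j n
      refine ⟨Nat.div_lt_div_of_lt_of_dvd hdn hjn, ?_⟩
      have h2 : d * Nat.gcd (j / d) (n / d) = d := by
        conv_rhs => rw [← hjg]
        rw [← Nat.gcd_mul_left, Nat.mul_div_cancel' hdj, Nat.mul_div_cancel' hdn]
      exact Nat.coprime_comm.mp
        (Nat.eq_of_mul_eq_mul_left hd0 (by rw [h2, mul_one]))
    · intro a ha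
      simp only [mem_coe, mem_filter, mem_range] at ha ⊢
      obtain ⟨han, hac⟩ := ha
      refine ⟨?_, ?_⟩
      · calc d * a < d * (n / d) := (Nat.mul_lt_mul_left hd0).mpr han
          _ = n := Nat.mul_div_cancel' hdn
      · have h2 : Nat.gcd (d * a) n = d * Nat.gcd a (n / d) := by
          conv_lhs => rw [← Nat.mul_div_cancel' hdn, Nat.gcd_mul_left]
        rw [h2, show Nat.gcd a (n / d) = 1 from Nat.coprime_comm.mp hac, mul_one]
    · intro j hj
      simp only [mem_coe, mem_filter, mem_range] at hj
      exact Nat.mul_div_cancel' (hj.2 ▸ Nat.gcd_dvd_left j n)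
    · intro a _
      exact Nat.mul_div_cancel_left _ hd0
  rw [Finset.sum_congr rfl (fun j hj => (Finset.mem_filter.mp hj).2), Finset.sum_const,
    hcard, smul_eq_mul]

lemma exists_int_sq_neg_one {p : ℕ} (hp : p.Prime) (hp1 : p % 4 = 1) :
    ∀ k : ℕ, ∃ a : ℤ, (p : ℤ) ^ k ∣ a ^ 2 + 1 := by
  haveI : Fact p.Prime := ⟨hp⟩
  have hp2' : (2 : ℤ) ≤ (p : ℤ) := by exact_mod_cast hp.two_le
  intro k
  induction k with
  | zero => exact ⟨0, by simp⟩
  | succ k ih =>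
    rcases Nat.eq_zero_or_pos k with rfl | hk
    · obtain ⟨z, hz⟩ := (ZMod.exists_sq_eq_neg_one_iff (p := p)).mpr (by omega)
      refine ⟨(z.val : ℤ), ?_⟩
      rw [pow_one, ← ZMod.intCast_zmod_eq_zero_iff_dvd]
      push_cast [ZMod.natCast_zmod_val]
      rw [sq, ← hz]
      norm_num
    · obtain ⟨a, c, hc⟩ := ih
      have hpa : ¬ ((p : ℤ) ∣ a) := by
        intro hd
        have h1 : (p : ℤ) ∣ a ^ 2 + 1 :=
          dvd_trans (dvd_pow_self (p : ℤ) hk.ne') ⟨c, hc⟩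
        have h2 : (p : ℤ) ∣ a ^ 2 := dvd_pow hd two_ne_zero
        have h3 : (p : ℤ) ∣ 1 := (Int.dvd_add_right h2).mp h1
        have := Int.le_of_dvd one_pos h3
        omega
      have ha0 : ((a : ZMod p)) ≠ 0 := by
        rwa [Ne, ZMod.intCast_zmod_eq_zero_iff_dvd]
      have h20 : ((2 : ZMod p)) ≠ 0 := by
        have : ¬ ((p : ℕ) ∣ 2) := by
          intro h; have := Nat.le_of_dvd (by norm_num) h; omega
        rw [show ((2 : ZMod p)) = ((2 : ℕ) : ZMod p) by push_cast; ring, Ne,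
          ZMod.natCast_eq_zero_iff]
        exact this
      have h2a0 : (2 * (a : ZMod p)) ≠ 0 := mul_ne_zero h20 ha0
      set T : ZMod p := -(c : ZMod p) * (2 * (a : ZMod p))⁻¹ with hT
      set t : ℤ := (T.val : ℤ) with ht
      have hdvd : (p : ℤ) ∣ c + 2 * a * t := by
        rw [← ZMod.intCast_zmod_eq_zero_iff_dvd]
        push_cast
        rw [ht]
        push_cast [ZMod.natCast_zmod_val]
        rw [hT]
        field_simp
        ring
      obtain ⟨m, hm⟩ := hdvd
      have h2k' : (p : ℤ) ^ k * (p : ℤ) ^ k = (p : ℤ) ^ (k + 1) * (p : ℤ) ^ (k - 1) := by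
        rw [← pow_add, ← pow_add]
        congr 1
        omega
      refine ⟨a + t * (p : ℤ) ^ k, m + t ^ 2 * (p : ℤ) ^ (k - 1), ?_⟩
      linear_combination hc + (p : ℤ) ^ k * hm + t ^ 2 * h2k'

lemma base3 {p : ℕ} (hp : p.Prime) (hp3 : p % 4 = 3) {a b : ℕ}
    (h : p ∣ a ^ 2 + b ^ 2) : p ∣ a ∧ p ∣ b := by
  haveI : Fact p.Prime := ⟨hp⟩
  have h0 : ((a : ZMod p)) ^ 2 + ((b : ZMod p)) ^ 2 = 0 := by
    have := (ZMod.natCast_eq_zero_iff _ _).mpr h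
    push_cast at this
    linear_combination this
  have hb : (b : ZMod p) = 0 := by
    by_contra hb0
    have hsq : IsSquare (-1 : ZMod p) := by
      refine ⟨(a : ZMod p) * ((b : ZMod p))⁻¹, ?_⟩
      have hbinv : (b : ZMod p) * ((b : ZMod p))⁻¹ = 1 := ZMod.mul_inv_of_unit _
        (Ne.isUnit hb0)
      field_simp
      linear_combination -h0
    exact (ZMod.exists_sq_eq_neg_one_iff (p := p)).mp hsq (by omega)
  have ha : (a : ZMod p) = 0 := by
    have : ((a : ZMod p)) ^ 2 = 0 := by rw [hb] at h0; linear_combination h0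
    exact pow_eq_zero_iff two_ne_zero |>.mp this
  exact ⟨(ZMod.natCast_eq_zero_iff _ _).mp ha,
    (ZMod.natCast_eq_zero_iff _ _).mp hb⟩

lemma key3 {p : ℕ} (hp : p.Prime) (hp3 : p % 4 = 3) :
    ∀ k a b : ℕ, p ^ k ∣ a ^ 2 + b ^ 2 → p ^ ((k + 1) / 2) ∣ a ∧ p ^ ((k + 1) / 2) ∣ b := by
  intro k
  induction k using Nat.strong_induction_on with
  | _ k ih =>
    match k with
    | 0 => exact fun a b _ => by simpa using ⟨one_dvd _, one_dvd _⟩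
    | 1 => exact fun a b h => by simpa using base3 hp hp3 (by simpa using h)
    | (k + 2) =>
      intro a b h
      have hp1 : p ∣ a ^ 2 + b ^ 2 :=
        dvd_trans (dvd_pow_self p (Nat.succ_ne_zero _)) h
      obtain ⟨⟨a', rfl⟩, ⟨b', rfl⟩⟩ := base3 hp hp3 hp1
      have h2 : p ^ k ∣ a' ^ 2 + b' ^ 2 := by
        have hrw : (p * a') ^ 2 + (p * b') ^ 2 = p ^ 2 * (a' ^ 2 + b' ^ 2) := by ring
        have h' : p ^ 2 * p ^ k ∣ p ^ 2 * (a' ^ 2 + b' ^ 2) := by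
          rw [← hrw, ← pow_add, add_comm 2 k]
          exact h
        exact (mul_dvd_mul_iff_left (pow_pos hp.pos 2).ne').mp h'
      obtain ⟨ha, hb⟩ := ih k (by omega) a' b' h2
      have hexp : (k + 2 + 1) / 2 = (k + 1) / 2 + 1 := by omega
      rw [hexp]
      constructor
      · rw [pow_succ, mul_comm (p ^ ((k+1)/2)) p]
        exact mul_dvd_mul_left p ha
      · rw [pow_succ, mul_comm (p ^ ((k+1)/2)) p]
        exact mul_dvd_mul_left p hb

lemma sols3 {p k : ℕ} (hp : p.Prime) (hp3 : p % 4 = 3) (hk : 0 < k) :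
    Nat.card {q : ZMod (p ^ k) × ZMod (p ^ k) // q.1 ^ 2 + q.2 ^ 2 = 0}
      = p ^ (k / 2) * p ^ (k / 2) := by
  have hn : 0 < p ^ k := pow_pos hp.pos k
  haveI : NeZero (p ^ k) := ⟨hn.ne'⟩
  set c := (k + 1) / 2 with hc
  have hck : c ≤ k := by omega
  have hpc : p ^ c ∣ p ^ k := pow_dvd_pow p hck
  have hcond : ∀ x y : ZMod (p ^ k),
      (x ^ 2 + y ^ 2 = 0 ↔ p ^ c ∣ x.val ∧ p ^ c ∣ y.val) := by
    intro x y
    have hxy : x ^ 2 + y ^ 2 = ((x.val ^ 2 + y.val ^ 2 : ℕ) : ZMod (p ^ k)) := by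
      push_cast [ZMod.natCast_zmod_val]
      ring
    rw [hxy, ZMod.natCast_eq_zero_iff]
    constructor
    · exact fun h => key3 hp hp3 k x.val y.val h
    · rintro ⟨hx, hy⟩
      have h2c : p ^ k ∣ p ^ (2 * c) := pow_dvd_pow p (by omega)
      refine dvd_add (h2c.trans ?_) (h2c.trans ?_)
      · rw [two_mul, pow_add]
        exact mul_dvd_mul (by exact hx) (by exact hx) |>.trans (by rw [sq])
      · rw [two_mul, pow_add]
        exact mul_dvd_mul (by exact hy) (by exact hy) |>.trans (by rw [sq])
  have e : {q : ZMod (p ^ k) × ZMod (p ^ k) // q.1 ^ 2 + q.2 ^ 2 = 0}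
      ≃ {x : ZMod (p ^ k) // p ^ c ∣ x.val} × {y : ZMod (p ^ k) // p ^ c ∣ y.val} :=
    { toFun := fun q => (⟨q.1.1, ((hcond _ _).mp q.2).1⟩, ⟨q.1.2, ((hcond _ _).mp q.2).2⟩)
      invFun := fun z => ⟨(z.1.1, z.2.1), (hcond _ _).mpr ⟨z.1.2, z.2.2⟩⟩
      left_inv := fun q => rfl
      right_inv := fun z => rfl }
  rw [Nat.card_congr e, Nat.card_prod, card_val_dvd hn hpc,
    Nat.pow_div hck hp.pos, show k - c = k / 2 by omega]

lemma sols1_card {n : ℕ} (i b2 : ZMod n) (hi : i ^ 2 = -1) (h2' : b2 * 2 = 1) :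
    Nat.card {q : ZMod n × ZMod n // q.1 ^ 2 + q.2 ^ 2 = 0}
      = Nat.card {q : ZMod n × ZMod n // q.1 * q.2 = 0} := by
  let E : (ZMod n × ZMod n) ≃ (ZMod n × ZMod n) :=
    { toFun := fun q => (q.1 + i * q.2, q.1 - i * q.2)
      invFun := fun z => (b2 * (z.1 + z.2), b2 * (-i) * (z.1 - z.2))
      left_inv := fun q => by
        ext
        · show b2 * ((q.1 + i * q.2) + (q.1 - i * q.2)) = q.1
          linear_combination q.1 * h2'
        · show b2 * (-i) * ((q.1 + i * q.2) - (q.1 - i * q.2)) = q.2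
          linear_combination (-2 * b2 * q.2) * hi + q.2 * h2'
      right_inv := fun z => by
        ext
        · show b2 * (z.1 + z.2) + i * (b2 * (-i) * (z.1 - z.2)) = z.1
          linear_combination (-(b2 * (z.1 - z.2))) * hi + z.1 * h2'
        · show b2 * (z.1 + z.2) - i * (b2 * (-i) * (z.1 - z.2)) = z.2
          linear_combination (b2 * (z.1 - z.2)) * hi + z.2 * h2' }
  refine Nat.card_congr (Equiv.subtypeEquiv E fun q => ?_)
  show q.1 ^ 2 + q.2 ^ 2 = 0 ↔ (q.1 + i * q.2) * (q.1 - i * q.2) = 0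
  have : (q.1 + i * q.2) * (q.1 - i * q.2) = q.1 ^ 2 + q.2 ^ 2 := by
    linear_combination (-(q.2 ^ 2)) * hi
  rw [this]

lemma sols_mul {m n : ℕ} (h : m.Coprime n) :
    Nat.card {q : ZMod (m * n) × ZMod (m * n) // q.1 ^ 2 + q.2 ^ 2 = 0}
      = Nat.card {q : ZMod m × ZMod m // q.1 ^ 2 + q.2 ^ 2 = 0}
        * Nat.card {q : ZMod n × ZMod n // q.1 ^ 2 + q.2 ^ 2 = 0} := by
  let e := ZMod.chineseRemainder h
  have e1 : {q : ZMod (m * n) × ZMod (m * n) // q.1 ^ 2 + q.2 ^ 2 = 0}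
      ≃ {q : (ZMod m × ZMod n) × (ZMod m × ZMod n) // q.1 ^ 2 + q.2 ^ 2 = 0} := by
    refine Equiv.subtypeEquiv (e.toEquiv.prodCongr e.toEquiv) fun q => ?_
    show q.1 ^ 2 + q.2 ^ 2 = 0 ↔ (e q.1) ^ 2 + (e q.2) ^ 2 = 0
    rw [← map_pow, ← map_pow, ← map_add, map_eq_zero_iff _ e.injective]
  have e2 : {q : (ZMod m × ZMod n) × (ZMod m × ZMod n) // q.1 ^ 2 + q.2 ^ 2 = 0}
      ≃ {a : ZMod m × ZMod m // a.1 ^ 2 + a.2 ^ 2 = 0}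
        × {b : ZMod n × ZMod n // b.1 ^ 2 + b.2 ^ 2 = 0} :=
    { toFun := fun q => (⟨(q.1.1.1, q.1.2.1), congrArg Prod.fst q.2⟩,
        ⟨(q.1.1.2, q.1.2.2), congrArg Prod.snd q.2⟩)
      invFun := fun z => ⟨((z.1.1.1, z.2.1.1), (z.1.1.2, z.2.1.2)),
        Prod.ext z.1.2 z.2.2⟩
      left_inv := fun q => rfl
      right_inv := fun z => rfl }
  rw [Nat.card_congr (e1.trans e2), Nat.card_prod]

noncomputable def chi (d : ℕ) : ℝ := ((ZMod.χ₄ (d : ZMod 4) : ℤ) : ℝ)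

lemma chi_one : chi 1 = 1 := by simp [chi]

lemma chi_mul (m n : ℕ) : chi (m * n) = chi m * chi n := by
  simp only [chi, Nat.cast_mul, map_mul, Int.cast_mul]

lemma chi_pow (m i : ℕ) : chi (m ^ i) = (chi m) ^ i := by
  induction i with
  | zero => simp [chi_one]
  | succ i ih => rw [pow_succ, chi_mul, ih, pow_succ]

lemma chi_one_mod_four {n : ℕ} (h : n % 4 = 1) : chi n = 1 := by
  simp [chi, ZMod.χ₄_nat_one_mod_four h]

lemma chi_three_mod_four {n : ℕ} (h : n % 4 = 3) : chi n = -1 := by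
  simp [chi, ZMod.χ₄_nat_three_mod_four h]

lemma chi_odd {n : ℕ} (h : n % 2 = 1) : chi n = (-1 : ℝ) ^ ((n - 1) / 2) := by
  have h2 : (n - 1) / 2 = n / 2 := by omega
  rw [h2, chi, ZMod.χ₄_eq_neg_one_pow h]
  push_cast
  ring

noncomputable def F : ArithmeticFunction ℝ :=
  ⟨fun d => if d = 0 then 0 else chi d * (Nat.totient d) / d, by simp⟩

lemma F_apply {d : ℕ} (hd : d ≠ 0) : F d = chi d * (Nat.totient d) / d := by
  simp [F, hd, ArithmeticFunction.coe_mk]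

lemma F_mult : F.IsMultiplicative := by
  refine ⟨?_, ?_⟩
  · simp [F_apply, chi_one]
  · intro m n h
    rcases Nat.eq_zero_or_pos m with rfl | hm
    · have : n = 1 := by simpa [Nat.coprime_zero_left] using h
      subst this
      simp [F, chi_one]
    rcases Nat.eq_zero_or_pos n with rfl | hn
    · have : m = 1 := by simpa [Nat.coprime_zero_right] using h
      subst this
      simp [F, chi_one]
    rw [F_apply (Nat.mul_ne_zero hm.ne' hn.ne'), F_apply hm.ne', F_apply hn.ne',
      chi_mul, Nat.totient_mul h]
    push_cast
    have hm0 : (m : ℝ) ≠ 0 := Nat.cast_ne_zero.mpr hm.ne'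
    have hn0 : (n : ℝ) ≠ 0 := Nat.cast_ne_zero.mpr hn.ne'
    field_simp

lemma sumF_mul {m n : ℕ} (h : m.Coprime n) :
    ∑ d ∈ (m * n).divisors, F d
      = (∑ d ∈ m.divisors, F d) * (∑ d ∈ n.divisors, F d) := by
  have := (ArithmeticFunction.isMultiplicative_zeta.natCast.mul F_mult).map_mul_of_coprime h
  rw [← ArithmeticFunction.coe_zeta_mul_apply, ← ArithmeticFunction.coe_zeta_mul_apply,
    ← ArithmeticFunction.coe_zeta_mul_apply]
  exact this

lemma pp_sum {p k : ℕ} (hp : p.Prime) :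
    (p ^ k : ℝ) * ∑ d ∈ (p ^ k).divisors, F d
      = ∑ i ∈ range (k + 1), chi p ^ i * (Nat.totient (p ^ i) : ℝ) * (p : ℝ) ^ (k - i) := by
  have hp0 : (p : ℝ) ≠ 0 := Nat.cast_ne_zero.mpr hp.pos.ne'
  rw [Nat.sum_divisors_prime_pow hp, mul_sum]
  refine sum_congr rfl fun i hi => ?_
  have hik : i ≤ k := by simpa [Nat.lt_succ_iff] using hi
  rw [F_apply (pow_pos hp.pos i).ne', chi_pow]
  push_cast
  rw [show ((p : ℝ) ^ k) = (p : ℝ) ^ (k - i) * (p : ℝ) ^ i by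
    rw [← pow_add]; congr 1; omega]
  field_simp

lemma pp1 {p k : ℕ} (hp : p.Prime) (hp1 : p % 4 = 1) :
    ((∑ d ∈ (p ^ k).divisors, Nat.totient (p ^ k / d) * d : ℕ) : ℝ)
      = (p ^ k : ℝ) * ∑ d ∈ (p ^ k).divisors, F d := by
  rw [pp_sum hp, chi_one_mod_four hp1, Nat.sum_divisors_prime_pow hp]
  push_cast
  simp only [one_pow, one_mul]
  rw [← Finset.sum_range_reflect (fun i => ((p ^ i).totient : ℝ) * (p : ℝ) ^ (k - i)) (k + 1)]
  refine sum_congr rfl fun i hi => ?_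
  have hik : i ≤ k := by simpa [Nat.lt_succ_iff] using hi
  rw [show k + 1 - 1 - i = k - i by omega, Nat.pow_div hik hp.pos,
    show k - (k - i) = i by omega]

lemma pp3 {p k : ℕ} (hp : p.Prime) (hp3 : p % 4 = 3) :
    ((p ^ (k / 2) * p ^ (k / 2) : ℕ) : ℝ)
      = (p ^ k : ℝ) * ∑ d ∈ (p ^ k).divisors, F d := by
  rw [pp_sum hp, chi_three_mod_four hp3]
  push_cast
  induction k with
  | zero => simp
  | succ k ih =>
    rw [Finset.sum_range_succ]
    have hstep : ∑ i ∈ range (k + 1), (-1 : ℝ) ^ i * (Nat.totient (p ^ i) : ℝ)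
          * (p : ℝ) ^ (k + 1 - i)
        = (p : ℝ) * ∑ i ∈ range (k + 1), (-1 : ℝ) ^ i * (Nat.totient (p ^ i) : ℝ)
          * (p : ℝ) ^ (k - i) := by
      rw [mul_sum]
      refine sum_congr rfl fun i hi => ?_
      have hik : i ≤ k := by simpa [Nat.lt_succ_iff] using hi
      rw [show k + 1 - i = (k - i) + 1 by omega, pow_succ]
      ring
    rw [hstep, ← ih]
    have htot : (Nat.totient (p ^ (k + 1)) : ℝ) = (p : ℝ) ^ (k + 1) - (p : ℝ) ^ k := by
      rw [Nat.totient_prime_pow hp (Nat.succ_pos k)]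
      push_cast [Nat.cast_sub hp.one_le]
      rw [pow_succ]
      ring
    rw [htot, Nat.sub_self, pow_zero]
    rcases Nat.even_or_odd k with he | ho
    · have hk2 : k % 2 = 0 := Nat.even_iff.mp he
      have h1 : (k + 1) / 2 = k / 2 := by omega
      have h2 : (-1 : ℝ) ^ (k + 1) = -1 := by
        rw [pow_succ, he.neg_one_pow]; ring
      have e1 : (p : ℝ) ^ (k / 2) * (p : ℝ) ^ (k / 2) = (p : ℝ) ^ k := by
        rw [← pow_add]; congr 1; omega
      rw [h1, h2, e1, pow_succ]
      ring
    · have hk2 : k % 2 = 1 := Nat.odd_iff.mp ho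
      have h1 : (k + 1) / 2 = k / 2 + 1 := by omega
      have h2 : (-1 : ℝ) ^ (k + 1) = 1 := by
        rw [pow_succ, ho.neg_one_pow]; ring
      have e1 : (p : ℝ) ^ (k / 2 + 1) * (p : ℝ) ^ (k / 2 + 1) = (p : ℝ) ^ (k + 1) := by
        rw [← pow_add]; congr 1; omega
      have e2 : (p : ℝ) * ((p : ℝ) ^ (k / 2) * (p : ℝ) ^ (k / 2)) = (p : ℝ) ^ k := by
        rw [← pow_add, ← pow_succ']; congr 1; omega
      rw [h1, h2, e1, e2]
      ring

lemma main_aux : ∀ r : ℕ, 0 < r → Odd r →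
    (Nat.card {p : ZMod r × ZMod r // p.1 ^ 2 + p.2 ^ 2 = 0} : ℝ)
      = (r : ℝ) * ∑ d ∈ r.divisors, F d := by
  intro r
  induction r using Nat.recOnPosPrimePosCoprime with
  | prime_pow p k hp' hk =>
    intro _ hodd
    have hpp : p.Prime := hp'
    have hn : 0 < p ^ k := pow_pos hpp.pos k
    haveI : NeZero (p ^ k) := ⟨hn.ne'⟩
    have hp2 : p % 2 = 1 := by
      rcases hpp.eq_two_or_odd with h2 | h1
      · exfalso
        subst h2
        have : Even (2 ^ k) := (Nat.even_pow).mpr ⟨even_two, hk.ne'⟩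
        exact (Nat.not_even_iff_odd.mpr hodd) this
      · exact h1
    rcases (show p % 4 = 1 ∨ p % 4 = 3 by omega) with h1 | h3
    · -- p ≡ 1 [MOD 4]
      obtain ⟨a, ha⟩ := exists_int_sq_neg_one hpp h1 k
      set i : ZMod (p ^ k) := ((a : ℤ) : ZMod (p ^ k)) with hidef
      have hi : i ^ 2 = -1 := by
        have h0 : ((a ^ 2 + 1 : ℤ) : ZMod (p ^ k)) = 0 := by
          rw [ZMod.intCast_zmod_eq_zero_iff_dvd]
          exact_mod_cast ha
        push_cast at h0
        linear_combination h0
      have h2u : IsUnit (2 : ZMod (p ^ k)) := by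
        have : IsUnit ((2 : ℕ) : ZMod (p ^ k)) := by
          rw [ZMod.isUnit_iff_coprime]
          exact Nat.Coprime.pow_right _
            (Nat.coprime_two_left.mpr (Nat.odd_iff.mpr hp2))
        simpa using this
      obtain ⟨u, hu⟩ := h2u
      have hb2 : ((u⁻¹ : (ZMod (p ^ k))ˣ) : ZMod (p ^ k)) * 2 = 1 := by
        rw [← hu]
        exact u.inv_mul
      rw [sols1_card i _ hi hb2, card_mul_zero hn, pp1 hpp h1]
      push_cast
      ring
    · -- p ≡ 3 [MOD 4]
      rw [sols3 hpp h3 hk, pp3 hpp h3]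
      push_cast
      ring
  | zero => intro hr; exact absurd hr (lt_irrefl 0)
  | one =>
    intro _ _
    haveI : Unique {q : ZMod 1 × ZMod 1 // q.1 ^ 2 + q.2 ^ 2 = 0} :=
      ⟨⟨⟨(0, 0), by simp⟩⟩, fun a => Subtype.ext (Subsingleton.elim _ _)⟩
    rw [Nat.card_unique, Nat.divisors_one, Finset.sum_singleton, F_apply one_ne_zero]
    simp [chi_one]
  | coprime a b ha hb hab iha ihb =>
    intro hpos hodd
    obtain ⟨hodda, hoddb⟩ := Nat.odd_mul.mp hodd
    have hap : 0 < a := by omega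
    have hbp : 0 < b := by omega
    rw [sols_mul hab, sumF_mul hab]
    push_cast
    rw [iha hap hodda, ihb hbp hoddb]
    ring

theorem count_x2_add_y2_eq_zero (r : ℕ) (hr : 0 < r) (hodd : Odd r) :
    (Nat.card {p : ZMod r × ZMod r // p.1 ^ 2 + p.2 ^ 2 = 0} : ℝ) =
      (r : ℝ) * ∑ d ∈ r.divisors, (-1 : ℝ) ^ ((d - 1) / 2) * Nat.totient d / d := by
  rw [main_aux r hr hodd]
  congr 1
  refine Finset.sum_congr rfl fun d hd => ?_
  obtain ⟨hdvd, -⟩ := Nat.mem_divisors.mp hd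
  have hd0 : d ≠ 0 := by
    rintro rfl
    exact hr.ne' (Nat.eq_zero_of_zero_dvd hdvd)
  have hd2 : d % 2 = 1 := by
    rcases Nat.even_or_odd d with he | ho
    · exfalso
      obtain ⟨c, hc⟩ := dvd_trans he.two_dvd hdvd
      have := Nat.odd_iff.mp hodd
      omega
    · exact Nat.odd_iff.mp ho
  rw [F_apply hd0, chi_odd hd2]
end
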